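/- arXiv:2510.22441 — 6 statements merged into one kernel-verified Lean document; each statement's English description precedes it below -/
import Mathlib

section
/- Let μ = (μ_n)_{n∈ℕ} be a sequence of nonnegative reals with μ_n → 0 as n → ∞ and at least one nonzero term, and set μ_* := max_n μ_n. For every σ > 0, the equation σ²(2 I_3(ε) − I_2(ε)/ε) = 1 has exactly one solution ε > 0, and this solution lies in the interval (0, μ_*). -/
open MeasureTheory ProbabilityTheory Real Set Filter Topology
open scoped ENNReal NNReal

noncomputable section

/-- The sequence space `ℓ²(ℕ)`. -/
abbrev EllTwo : Type := lp (fun _ : ℕ => ℝ) 2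

instance : Fact ((1 : ℝ≥0∞) ≤ 2) := ⟨by norm_num⟩

/-- The semi-axis-counting function `M_μ(ε) = #{n : μ_n ≥ ε}`. -/
def Mcount (μ : ℕ → ℝ) (ε : ℝ) : ℝ := ({n : ℕ | ε ≤ μ n}.ncard : ℝ)

/-- The type-`τ` integral `I_τ(ε) = ∫_ε^∞ M_μ(u) u^{-τ} du`. -/
def Itau (μ : ℕ → ℝ) (τ ε : ℝ) : ℝ := ∫ u in Set.Ioi ε, Mcount μ u / u ^ τ

namespace CritAux

/-- auxiliary function: `H ε = ∑ max(μ n - ε, 0)/μ n ^ 2`. -/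
def Hfun (μ : ℕ → ℝ) (ε : ℝ) : ℝ := ∑' n, max (μ n - ε) 0 / μ n ^ 2

variable {μ : ℕ → ℝ}

lemma finite_gt (hlim : Filter.Tendsto μ Filter.atTop (nhds 0)) {ε : ℝ} (hε : 0 < ε) :
    {n | ε < μ n}.Finite := by
  have h := hlim.eventually (gt_mem_nhds hε)
  rw [eventually_atTop] at h
  obtain ⟨N, hN⟩ := h
  apply (Set.finite_Iio N).subset
  intro n hn
  by_contra hn'
  exact absurd (hN n (not_lt.1 (by simpa using hn'))) (not_lt.2 hn.le)

lemma Hfun_eq_sum {ε : ℝ} {S : Finset ℕ} (hS : ∀ n, ε < μ n → n ∈ S) :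
    Hfun μ ε = ∑ n ∈ S, max (μ n - ε) 0 / μ n ^ 2 := by
  apply tsum_eq_sum
  intro n hn
  have : μ n ≤ ε := le_of_not_gt fun h => hn (hS n h)
  rw [max_eq_right (by linarith), zero_div]

lemma Itau_eq (hlim : Filter.Tendsto μ Filter.atTop (nhds 0)) {ε τ : ℝ}
    (hε : 0 < ε) (hτ : 1 < τ) :
    Itau μ τ ε = ∑ n ∈ (finite_gt hlim hε).toFinset,
      ((μ n) ^ (1 - τ) - ε ^ (1 - τ)) / (1 - τ) := by
  classical
  set S := (finite_gt hlim hε).toFinset with hSdef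
  have hmemS : ∀ n, n ∈ S ↔ ε < μ n := by
    intro n; simp [hSdef]
  have key : ∀ u ∈ Set.Ioi ε, Mcount μ u / u ^ τ
      = ∑ n ∈ S, (Set.Ioc ε (μ n)).indicator (fun u => u ^ (-τ)) u := by
    intro u hu
    have hu' : ε < u := hu
    have hu0 : (0:ℝ) < u := hε.trans hu'
    have hset : {n : ℕ | u ≤ μ n} = ↑(S.filter (fun n => u ≤ μ n)) := by
      ext n
      simp only [Set.mem_setOf_eq, Finset.coe_filter, Set.mem_setOf_eq, hmemS]
      exact ⟨fun h => ⟨lt_of_lt_of_le hu' h, h⟩, fun h => h.2⟩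
    have hM : Mcount μ u = ((S.filter (fun n => u ≤ μ n)).card : ℝ) := by
      rw [Mcount, hset, Set.ncard_coe_finset]
    have hR : ∑ n ∈ S, (Set.Ioc ε (μ n)).indicator (fun u => u ^ (-τ)) u
        = ((S.filter (fun n => u ≤ μ n)).card : ℝ) * u ^ (-τ) := by
      rw [Finset.sum_indicator_eq_sum_filter]
      have : S.filter (fun n => u ∈ Set.Ioc ε (μ n)) = S.filter (fun n => u ≤ μ n) := by
        apply Finset.filter_congr
        intro n _
        simp [Set.mem_Ioc, hu']
      rw [this, Finset.sum_const, nsmul_eq_mul]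
    rw [hM, hR, Real.rpow_neg hu0.le, div_eq_mul_inv]
  rw [Itau, MeasureTheory.setIntegral_congr_fun measurableSet_Ioi key]
  have hint : ∀ n ∈ S, MeasureTheory.IntegrableOn
      ((Set.Ioc ε (μ n)).indicator (fun u => u ^ (-τ))) (Set.Ioi ε) := by
    intro n _
    have hcont : ContinuousOn (fun u : ℝ => u ^ (-τ)) (Set.Icc ε (μ n)) := by
      intro x hx
      exact (Real.continuousAt_rpow_const x (-τ)
        (Or.inl (ne_of_gt (lt_of_lt_of_le hε hx.1)))).continuousWithinAt
    have h1 : MeasureTheory.IntegrableOn (fun u : ℝ => u ^ (-τ)) (Set.Icc ε (μ n)) :=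
      hcont.integrableOn_compact isCompact_Icc
    exact ((h1.mono_set Set.Ioc_subset_Icc_self).integrable_indicator
      measurableSet_Ioc).integrableOn
  rw [MeasureTheory.integral_finset_sum _ hint]
  apply Finset.sum_congr rfl
  intro n hn
  have hεn : ε < μ n := (hmemS n).1 hn
  rw [MeasureTheory.setIntegral_indicator measurableSet_Ioc,
    Set.inter_eq_right.2 Set.Ioc_subset_Ioi_self,
    ← intervalIntegral.integral_of_le hεn.le,
    integral_rpow (Or.inr ⟨by linarith, by
      rw [Set.uIcc_of_le hεn.le]
      exact fun h => absurd h.1 (not_le.2 hε)⟩)]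
  ring_nf

lemma key_eq (hlim : Filter.Tendsto μ Filter.atTop (nhds 0)) {ε : ℝ} (hε : 0 < ε) :
    2 * Itau μ 3 ε - Itau μ 2 ε / ε = Hfun μ ε / ε := by
  rw [Itau_eq hlim hε (by norm_num : (1:ℝ) < 3),
      Itau_eq hlim hε (by norm_num : (1:ℝ) < 2),
      Hfun_eq_sum (S := (finite_gt hlim hε).toFinset)
        (fun n h => (Set.Finite.mem_toFinset _).2 h)]
  rw [Finset.mul_sum, Finset.sum_div, Finset.sum_div, ← Finset.sum_sub_distrib]
  apply Finset.sum_congr rfl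
  intro n hn
  have hεn : ε < μ n := by simpa using hn
  have h0 : 0 < μ n := hε.trans hεn
  have e2 : ∀ x : ℝ, 0 < x → x ^ ((1:ℝ)-3) = (x^2)⁻¹ := by
    intro x hx
    rw [show (1:ℝ)-3 = -((2:ℕ):ℝ) by norm_num, Real.rpow_neg hx.le, Real.rpow_natCast]
  have e1 : ∀ x : ℝ, 0 < x → x ^ ((1:ℝ)-2) = x⁻¹ := by
    intro x hx
    rw [show (1:ℝ)-2 = -1 by norm_num, Real.rpow_neg_one]
  rw [e2 _ h0, e2 _ hε, e1 _ h0, e1 _ hε, max_eq_left (by linarith)]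
  field_simp
  ring

lemma Hfun_zero_of_ge {m : ℝ} (hm : ∀ n, μ n ≤ m) {ε : ℝ} (hε : m ≤ ε) :
    Hfun μ ε = 0 := by
  have : ∀ n, max (μ n - ε) 0 / μ n ^ 2 = 0 := by
    intro n
    rw [max_eq_right (by linarith [hm n]), zero_div]
  simp only [Hfun, this, tsum_zero]

lemma phi_lt (hlim : Filter.Tendsto μ Filter.atTop (nhds 0)) {ε1 ε2 : ℝ} {n0 : ℕ}
    (h1 : 0 < ε1) (h12 : ε1 < ε2) (hn0 : ε2 ≤ μ n0) :
    Hfun μ ε2 / ε2 < Hfun μ ε1 / ε1 := by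
  classical
  set S := (finite_gt hlim h1).toFinset with hSdef
  have hmemS : ∀ n, n ∈ S ↔ ε1 < μ n := by intro n; simp [hSdef]
  have h2 : 0 < ε2 := h1.trans h12
  rw [Hfun_eq_sum (S := S) (fun n h => (hmemS n).2 h),
      Hfun_eq_sum (S := S) (fun n h => (hmemS n).2 (h12.trans h)),
      Finset.sum_div, Finset.sum_div]
  apply Finset.sum_lt_sum
  · intro n hn
    have hεn : ε1 < μ n := (hmemS n).1 hn
    have h0 : 0 < μ n := h1.trans hεn
    rcases le_or_gt (μ n) ε2 with h | h
    · rw [max_eq_right (by linarith)]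
      simp only [zero_div]
      positivity
    · rw [max_eq_left (by linarith), max_eq_left (by linarith), div_div, div_div,
        div_le_div_iff₀ (by positivity) (by positivity)]
      nlinarith [mul_le_mul_of_nonneg_left h12.le (le_of_lt (pow_pos h0 3))]
  · refine ⟨n0, (hmemS n0).2 (lt_of_lt_of_le h12 hn0), ?_⟩
    have h0 : 0 < μ n0 := h2.trans_le hn0
    rw [max_eq_left (by linarith), max_eq_left (by linarith), div_div, div_div,
      div_lt_div_iff₀ (by positivity) (by positivity)]
    nlinarith [mul_pos (pow_pos h0 3) (sub_pos.2 h12)]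

lemma Hfun_continuousAt (hlim : Filter.Tendsto μ Filter.atTop (nhds 0)) {ε0 : ℝ}
    (h : 0 < ε0) : ContinuousAt (Hfun μ) ε0 := by
  classical
  have hhalf : 0 < ε0 / 2 := by linarith
  set S := (finite_gt hlim hhalf).toFinset with hSdef
  have hg : Continuous (fun ε : ℝ => ∑ n ∈ S, max (μ n - ε) 0 / μ n ^ 2) := by
    apply continuous_finset_sum
    intro n _
    exact ((continuous_const.sub continuous_id).max continuous_const).div_const _
  apply hg.continuousAt.congr
  filter_upwards [Ioi_mem_nhds (by linarith : ε0 / 2 < ε0)] with ε hε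
  rw [Hfun_eq_sum (S := S) (fun n hn => by
    simp only [hSdef, Set.Finite.mem_toFinset, Set.mem_setOf_eq]
    exact lt_trans (Set.mem_Ioi.1 hε) hn)]

end CritAux

open CritAux in
theorem criticalRadius_exists_unique (μ : ℕ → ℝ) (hnn : ∀ n, 0 ≤ μ n)
    (hlim : Filter.Tendsto μ Filter.atTop (nhds 0))
    (hone : ∃ n : ℕ, μ n ≠ 0) (σ : ℝ) (hσ : 0 < σ) :
    (∃! ε : ℝ, 0 < ε ∧ σ ^ 2 * (2 * Itau μ 3 ε - Itau μ 2 ε / ε) = 1) ∧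
    (∀ ε : ℝ, 0 < ε → σ ^ 2 * (2 * Itau μ 3 ε - Itau μ 2 ε / ε) = 1 →
      ε ∈ Set.Ioo 0 (⨆ n, μ n)) := by
  classical
  obtain ⟨n1, hn1⟩ := hone
  have hn1' : 0 < μ n1 := lt_of_le_of_ne (hnn n1) (Ne.symm hn1)
  have hAfin : {n | μ n1 ≤ μ n}.Finite :=
    (finite_gt hlim (half_pos hn1')).subset (fun n hn => by
      simp only [Set.mem_setOf_eq] at *; linarith)
  obtain ⟨n0, hn0A, hn0max⟩ :=
    Set.Finite.exists_maximalFor μ _ hAfin ⟨n1, le_refl (μ n1)⟩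
  simp only [Set.mem_setOf_eq] at hn0A
  have hmax : ∀ n, μ n ≤ μ n0 := by
    intro n
    rcases le_or_gt (μ n1) (μ n) with h | h
    · by_contra hc
      push_neg at hc
      exact absurd (hn0max h hc.le) (not_le.2 hc)
    · exact h.le.trans hn0A
  set m := μ n0 with hm
  have hm0 : 0 < m := hn1'.trans_le hn0A
  have hbdd : BddAbove (Set.range μ) := ⟨m, by rintro _ ⟨n, rfl⟩; exact hmax n⟩
  have hsup : (⨆ n, μ n) = m := le_antisymm (ciSup_le hmax) (le_ciSup hbdd n0)
  have hiff : ∀ ε : ℝ, 0 < ε →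
      ((σ ^ 2 * (2 * Itau μ 3 ε - Itau μ 2 ε / ε) = 1) ↔ Hfun μ ε / ε = 1 / σ ^ 2) := by
    intro ε hε
    rw [key_eq hlim hε, mul_comm]
    exact (eq_div_iff (ne_of_gt (pow_pos hσ 2))).symm
  have hltm : ∀ ε : ℝ, 0 < ε → Hfun μ ε / ε = 1 / σ ^ 2 → ε < m := by
    intro ε hε heq
    by_contra hc
    push_neg at hc
    rw [Hfun_zero_of_ge hmax hc, zero_div] at heq
    have : (0:ℝ) < 1 / σ ^ 2 := by positivity
    linarith [heq]
  set ε0 := min (m / 2) (σ ^ 2 / (2 * m)) with hε0def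
  have hε0 : 0 < ε0 := lt_min (by linarith) (by positivity)
  have hε0m : ε0 < m := lt_of_le_of_lt (min_le_left _ _) (by linarith)
  have hφε0 : 1 / σ ^ 2 ≤ Hfun μ ε0 / ε0 := by
    have hSmem : n0 ∈ (finite_gt hlim hε0).toFinset := by
      simp only [Set.Finite.mem_toFinset, Set.mem_setOf_eq]
      exact hε0m
    have hsum : (m - ε0) / m ^ 2 ≤ Hfun μ ε0 := by
      rw [Hfun_eq_sum (S := (finite_gt hlim hε0).toFinset)
        (fun n h => (Set.Finite.mem_toFinset _).2 h)]
      have h1 := Finset.single_le_sum (f := fun n => max (μ n - ε0) 0 / μ n ^ 2)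
        (fun n _ => by positivity) hSmem
      calc (m - ε0) / m ^ 2 = max (μ n0 - ε0) 0 / μ n0 ^ 2 := by
            rw [← hm, max_eq_left (by linarith)]
        _ ≤ _ := h1
    have h2' : ε0 * (2 * m) ≤ σ ^ 2 := (le_div_iff₀ (by positivity)).1 (min_le_right _ _)
    have h1' : ε0 ≤ m / 2 := min_le_left _ _
    have hkey : 1 / σ ^ 2 ≤ (m - ε0) / m ^ 2 / ε0 := by
      rw [div_div, div_le_div_iff₀ (by positivity) (by positivity)]
      nlinarith [mul_le_mul_of_nonneg_right h2' (le_of_lt hm0),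
        mul_le_mul_of_nonneg_right h1' (sq_nonneg σ)]
    exact hkey.trans (by gcongr)
  have hφm : Hfun μ m / m = 0 := by
    rw [Hfun_zero_of_ge hmax (le_refl m), zero_div]
  have hcont : ContinuousOn (fun ε => Hfun μ ε / ε) (Set.Icc ε0 m) := by
    intro x hx
    have hx0 : 0 < x := hε0.trans_le hx.1
    exact ((Hfun_continuousAt hlim hx0).div continuousAt_id (ne_of_gt hx0)).continuousWithinAt
  have hmem : (1 / σ ^ 2) ∈ Set.Icc (Hfun μ m / m) (Hfun μ ε0 / ε0) := by
    rw [hφm]; exact ⟨by positivity, hφε0⟩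
  obtain ⟨ε, hεmem, hφε⟩ := intermediate_value_Icc' hε0m.le hcont hmem
  simp only at hφε
  have hεpos : 0 < ε := hε0.trans_le hεmem.1
  refine ⟨⟨ε, ⟨hεpos, (hiff ε hεpos).2 hφε⟩, ?_⟩, ?_⟩
  · rintro y ⟨hy0, hy⟩
    have hyφ := (hiff y hy0).1 hy
    have hyltm := hltm y hy0 hyφ
    have hεltm := hltm ε hεpos hφε
    rcases lt_trichotomy y ε with h | h | h
    · exfalso
      have := phi_lt (μ := μ) hlim hy0 h (le_of_lt hεltm)
      rw [hyφ, hφε] at this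
      exact lt_irrefl _ this
    · exact h
    · exfalso
      have := phi_lt (μ := μ) hlim hεpos h (le_of_lt hyltm)
      rw [hyφ, hφε] at this
      exact lt_irrefl _ this
  · intro ε' hε' heq'
    rw [hsup]
    exact ⟨hε', hltm ε' hε' ((hiff ε' hε').1 heq')⟩
end
end

section
/- Let τ₁, τ₂ ≥ 1 be real numbers and let μ = (μ_n)_{n∈ℕ} be a sequence of nonnegative reals with μ_n → 0 as n → ∞. Then for all ε > 0, I_{τ₁}(ε) = ε^{τ₂−τ₁} · I_{τ₂}(ε) + (τ₂ − τ₁) · ∫_ε^∞ I_{τ₂}(u) · u^{τ₂−τ₁−1} du. -/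
open MeasureTheory ProbabilityTheory Real Set Filter Topology
open scoped ENNReal NNReal

noncomputable section

/-- Relation between type-`τ₁` and type-`τ₂` integrals:
`I_{τ₁}(ε) = ε^{τ₂−τ₁} I_{τ₂}(ε) + (τ₂−τ₁) ∫_ε^∞ I_{τ₂}(u) u^{τ₂−τ₁−1} du`. -/
theorem Itau_trans (τ₁ τ₂ : ℝ) (hτ₁ : 1 ≤ τ₁) (hτ₂ : 1 ≤ τ₂)
    (μ : ℕ → ℝ) (hnn : ∀ n, 0 ≤ μ n)
    (hlim : Filter.Tendsto μ Filter.atTop (nhds 0))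
    (ε : ℝ) (hε : 0 < ε) :
    Itau μ τ₁ ε = ε ^ (τ₂ - τ₁) * Itau μ τ₂ ε +
      (τ₂ - τ₁) * ∫ u in Set.Ioi ε, Itau μ τ₂ u * u ^ (τ₂ - τ₁ - 1) := by
  classical
  rcases eq_or_ne τ₂ τ₁ with heq | hne
  · rw [heq]
    simp [sub_self]
  set σ := τ₂ - τ₁ with hσdef
  have hσ : σ ≠ 0 := sub_ne_zero.mpr hne
  -- only finitely many `n` with `ε < μ n`
  have hfin : {n : ℕ | ε < μ n}.Finite := by
    obtain ⟨N, hN⟩ := Filter.eventually_atTop.mp (hlim.eventually_lt_const hε)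
    apply Set.Finite.subset (Set.finite_Iio N)
    intro n hn
    by_contra h
    exact absurd (hN n (not_lt.mp h)) (asymm hn)
  set S : Finset ℕ := hfin.toFinset with hSdef
  have hmemS : ∀ n, n ∈ S ↔ ε < μ n := fun n => hfin.mem_toFinset
  -- integrability of power functions on bounded intervals
  have hrpowInt : ∀ (c x y : ℝ), ε ≤ x → IntegrableOn (fun u : ℝ => u ^ c) (Ioc x y) := by
    intro c x y hx
    refine (ContinuousOn.integrableOn_Icc ?_).mono_set Ioc_subset_Icc_self
    exact continuousOn_id.rpow_const fun t ht =>
      Or.inl (ne_of_gt (lt_of_lt_of_le hε (le_trans hx ht.1)))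
  -- moving an indicator into the domain of integration
  have hIndInt : ∀ (s t : Set ℝ) (f : ℝ → ℝ), MeasurableSet s →
      (∫ x in t, s.indicator f x) = ∫ x in s ∩ t, f x := by
    intro s t f hs
    rw [integral_indicator hs, Measure.restrict_restrict hs]
  -- Lemma A : representation of `Itau` as a finite sum
  have hA : ∀ (τ ε' : ℝ), ε ≤ ε' →
      Itau μ τ ε' = ∑ n ∈ S, ∫ u in Ioc ε' (μ n), u ^ (-τ) := by
    intro τ ε' hε'
    have hε'0 : 0 < ε' := lt_of_lt_of_le hε hε'
    have h1 : ∀ u ∈ Ioi ε', Mcount μ u / u ^ τ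
        = ∑ n ∈ S, (Ioc ε' (μ n)).indicator (fun t => t ^ (-τ)) u := by
      intro u hu
      have hu' : ε' < u := hu
      have hu0 : 0 < u := hε'0.trans hu'
      have hset : {n : ℕ | u ≤ μ n} = ↑(S.filter fun n => u ≤ μ n) := by
        ext n
        simp only [Set.mem_setOf_eq, Finset.coe_filter, hmemS]
        exact ⟨fun h => ⟨lt_of_lt_of_le (lt_of_le_of_lt hε' hu') h, h⟩, fun h => h.2⟩
      rw [Mcount, hset, Set.ncard_coe_finset]
      have h2 : ∀ n ∈ S, (Ioc ε' (μ n)).indicator (fun t => t ^ (-τ)) u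
          = if u ≤ μ n then u ^ (-τ) else 0 := by
        intro n _
        simp [Set.indicator_apply, Set.mem_Ioc, hu']
      rw [Finset.sum_congr rfl h2, ← Finset.sum_filter, Finset.sum_const, nsmul_eq_mul,
        Real.rpow_neg hu0.le, div_eq_mul_inv]
    have hint' : ∀ n ∈ S, Integrable
        (fun u => (Ioc ε' (μ n)).indicator (fun t => t ^ (-τ)) u)
        (volume.restrict (Ioi ε')) := by
      intro n _
      rw [integrable_indicator_iff measurableSet_Ioc]
      exact (hrpowInt (-τ) ε' (μ n) hε').restrict
    have e0 : Itau μ τ ε'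
        = ∫ u in Ioi ε', ∑ n ∈ S, (Ioc ε' (μ n)).indicator (fun t => t ^ (-τ)) u := by
      simp only [Itau]
      exact setIntegral_congr_fun measurableSet_Ioi h1
    rw [e0, integral_finset_sum _ hint']
    refine Finset.sum_congr rfl fun n hn => ?_
    rw [hIndInt _ _ _ measurableSet_Ioc, Set.inter_eq_left.mpr Ioc_subset_Ioi_self]
  -- the kernel for Fubini
  set F : ℕ → ℝ × ℝ → ℝ :=
    fun n p => (Ioc p.1 (μ n)).indicator (fun t => t ^ (-τ₂)) p.2 * p.1 ^ (σ - 1) with hF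
  -- slices of the kernel
  have hslice1 : ∀ n, ∀ u ∈ Ioi ε,
      (∫ t in Ioi ε, F n (u, t)) = (∫ t in Ioc u (μ n), t ^ (-τ₂)) * u ^ (σ - 1) := by
    intro n u hu
    simp only [hF]
    rw [integral_mul_const, hIndInt _ _ _ measurableSet_Ioc,
      Set.inter_eq_left.mpr (Ioc_subset_Ioi_self.trans (Ioi_subset_Ioi (le_of_lt hu)))]
  have hslice2 : ∀ n, ∀ t ∈ Ioi ε,
      (∫ u in Ioi ε, F n (u, t))
        = (Ioc ε (μ n)).indicator (fun y => y ^ (-τ₂) * ∫ v in Ioo ε y, v ^ (σ - 1)) t := by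
    intro n t ht
    by_cases htn : t ≤ μ n
    · have h1 : ∀ u : ℝ, F n (u, t)
          = (Iio t).indicator (fun u => t ^ (-τ₂) * u ^ (σ - 1)) u := by
        intro u
        by_cases h : u < t
        · simp [hF, Set.indicator_apply, Set.mem_Ioc, Set.mem_Iio, h, htn]
        · simp [hF, Set.indicator_apply, Set.mem_Ioc, Set.mem_Iio, h]
      have e1 : (∫ u in Ioi ε, F n (u, t))
          = ∫ u in Ioi ε, (Iio t).indicator (fun u => t ^ (-τ₂) * u ^ (σ - 1)) u :=
        setIntegral_congr_fun measurableSet_Ioi (fun u _ => h1 u)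
      rw [e1, hIndInt _ _ _ measurableSet_Iio, Set.Iio_inter_Ioi, integral_const_mul,
        Set.indicator_of_mem (Set.mem_Ioc.mpr ⟨ht, htn⟩)
          (fun y => y ^ (-τ₂) * ∫ v in Ioo ε y, v ^ (σ - 1))]
    · have h1 : ∀ u : ℝ, F n (u, t) = 0 := by
        intro u
        simp [hF, Set.indicator_apply, Set.mem_Ioc, htn]
      have e1 : (∫ u in Ioi ε, F n (u, t)) = ∫ u in Ioi ε, (0 : ℝ) :=
        setIntegral_congr_fun measurableSet_Ioi (fun u _ => h1 u)
      rw [e1, integral_zero, Set.indicator_of_notMem (fun hc => htn hc.2)]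
  -- integrability of the kernel on the product
  have hFint : ∀ n, Integrable (F n)
      ((volume.restrict (Ioi ε)).prod (volume.restrict (Ioi ε))) := by
    intro n
    have hFmeas : Measurable (F n) := by
      have hFeq : F n = Set.indicator {p : ℝ × ℝ | p.1 < p.2 ∧ p.2 ≤ μ n}
          (fun p => p.2 ^ (-τ₂) * p.1 ^ (σ - 1)) := by
        funext p
        by_cases h : p.1 < p.2 ∧ p.2 ≤ μ n <;>
          simp [hF, Set.indicator_apply, Set.mem_Ioc, Set.mem_setOf_eq, h]
      rw [hFeq]
      apply Measurable.indicator
      · fun_prop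
      · exact (measurableSet_lt measurable_fst measurable_snd).inter
          (measurable_snd measurableSet_Iic)
    set M : ℝ := max (μ n) ε with hM
    have hεM : ε ≤ M := le_max_right _ _
    obtain ⟨C₁, hC₁⟩ := (isCompact_Icc : IsCompact (Icc ε M)).exists_bound_of_continuousOn
      (continuousOn_id.rpow_const (p := -τ₂)
        (fun x hx => Or.inl (ne_of_gt (lt_of_lt_of_le hε hx.1))))
    obtain ⟨C₂, hC₂⟩ := (isCompact_Icc : IsCompact (Icc ε M)).exists_bound_of_continuousOn
      (continuousOn_id.rpow_const (p := σ - 1)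
        (fun x hx => Or.inl (ne_of_gt (lt_of_lt_of_le hε hx.1))))
    have hC₁0 : 0 ≤ C₁ := le_trans (norm_nonneg _) (hC₁ ε ⟨le_refl ε, hεM⟩)
    have hC₂0 : 0 ≤ C₂ := le_trans (norm_nonneg _) (hC₂ ε ⟨le_refl ε, hεM⟩)
    refine Integrable.mono'
      (g := fun p => (Icc ε M ×ˢ Icc ε M).indicator (fun _ => C₁ * C₂) p)
      ?_ hFmeas.aestronglyMeasurable ?_
    · rw [integrable_indicator_iff (measurableSet_Icc.prod measurableSet_Icc)]
      refine (integrableOn_const_iff (C := C₁ * C₂)).mpr (Or.inr ?_)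
      calc ((volume.restrict (Ioi ε)).prod (volume.restrict (Ioi ε))) (Icc ε M ×ˢ Icc ε M)
          = (volume.restrict (Ioi ε)) (Icc ε M) * (volume.restrict (Ioi ε)) (Icc ε M) :=
            Measure.prod_prod _ _
        _ ≤ volume (Icc ε M) * volume (Icc ε M) :=
            mul_le_mul' (Measure.restrict_apply_le _ _) (Measure.restrict_apply_le _ _)
        _ < ⊤ := ENNReal.mul_lt_top measure_Icc_lt_top measure_Icc_lt_top
    · rw [Measure.prod_restrict]
      filter_upwards [self_mem_ae_restrict (measurableSet_Ioi.prod measurableSet_Ioi)] with p hp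
      by_cases hmem : p.2 ∈ Ioc p.1 (μ n)
      · have hp1 : ε < p.1 := hp.1
        have hp2 : ε < p.2 := hp.2
        have hpK : p ∈ Icc ε M ×ˢ Icc ε M :=
          ⟨⟨hp1.le, le_trans (le_trans hmem.1.le hmem.2) (le_max_left _ _)⟩,
           ⟨hp2.le, le_trans hmem.2 (le_max_left _ _)⟩⟩
        rw [Set.indicator_of_mem hpK]
        simp only [hF]
        rw [Set.indicator_of_mem hmem, norm_mul]
        exact mul_le_mul (hC₁ p.2 ⟨hp2.le, le_trans hmem.2 (le_max_left _ _)⟩)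
          (hC₂ p.1 ⟨hp1.le, le_trans (le_trans hmem.1.le hmem.2) (le_max_left _ _)⟩)
          (norm_nonneg _) hC₁0
      · simp only [hF, Set.indicator_of_notMem hmem, zero_mul, norm_zero]
        exact Set.indicator_nonneg (fun _ _ => mul_nonneg hC₁0 hC₂0) p
  -- a little calculus
  have hFTC : ∀ t : ℝ, ε < t → (∫ v in Ioo ε t, v ^ (σ - 1)) = (t ^ σ - ε ^ σ) / σ := by
    intro t ht
    have h0 : (0 : ℝ) ∉ Set.uIcc ε t := by
      rw [Set.uIcc_of_le ht.le]
      exact fun h => absurd h.1 (not_le.mpr hε)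
    have hσ1 : σ - 1 ≠ -1 := by
      intro h
      exact hσ (by linarith)
    rw [← integral_Ioc_eq_integral_Ioo, ← intervalIntegral.integral_of_le ht.le,
      integral_rpow (Or.inr ⟨hσ1, h0⟩), show σ - 1 + 1 = σ by ring]
  -- the key per-index identity, via Fubini
  have key : ∀ n, σ * ∫ u in Ioi ε, ((∫ t in Ioc u (μ n), t ^ (-τ₂)) * u ^ (σ - 1))
      = ∫ t in Ioc ε (μ n), t ^ (-τ₂) * (t ^ σ - ε ^ σ) := by
    intro n
    have h1 : (∫ u in Ioi ε, ((∫ t in Ioc u (μ n), t ^ (-τ₂)) * u ^ (σ - 1)))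
        = ∫ u in Ioi ε, ∫ t in Ioi ε, F n (u, t) :=
      setIntegral_congr_fun measurableSet_Ioi (fun u hu => (hslice1 n u hu).symm)
    have h2 := integral_integral_swap (f := fun u t => F n (u, t))
      (μ := volume.restrict (Ioi ε)) (ν := volume.restrict (Ioi ε)) (hFint n)
    have h3 : (∫ t in Ioi ε, ∫ u in Ioi ε, F n (u, t))
        = ∫ t in Ioc ε (μ n), t ^ (-τ₂) * ∫ v in Ioo ε t, v ^ (σ - 1) := by
      have e1 : (∫ t in Ioi ε, ∫ u in Ioi ε, F n (u, t))
          = ∫ t in Ioi ε,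
              (Ioc ε (μ n)).indicator (fun y => y ^ (-τ₂) * ∫ v in Ioo ε y, v ^ (σ - 1)) t :=
        setIntegral_congr_fun measurableSet_Ioi (fun t ht => hslice2 n t ht)
      rw [e1, hIndInt _ _ _ measurableSet_Ioc,
        Set.inter_eq_left.mpr Ioc_subset_Ioi_self]
    rw [h1, h2, h3, ← integral_const_mul]
    apply setIntegral_congr_fun measurableSet_Ioc
    intro t ht
    simp only
    rw [hFTC t ht.1]
    field_simp
  -- the middle integral as a finite sum
  have hmid : (∫ u in Ioi ε, Itau μ τ₂ u * u ^ (σ - 1))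
      = ∑ n ∈ S, ∫ u in Ioi ε, ((∫ t in Ioc u (μ n), t ^ (-τ₂)) * u ^ (σ - 1)) := by
    have h1 : (∫ u in Ioi ε, Itau μ τ₂ u * u ^ (σ - 1))
        = ∫ u in Ioi ε, ∑ n ∈ S, (∫ t in Ioc u (μ n), t ^ (-τ₂)) * u ^ (σ - 1) := by
      apply setIntegral_congr_fun measurableSet_Ioi
      intro u hu
      simp only
      rw [hA τ₂ u (le_of_lt hu), Finset.sum_mul]
    rw [h1]
    apply integral_finset_sum
    intro n _
    refine ((hFint n).integral_prod_left).congr ?_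
    filter_upwards [self_mem_ae_restrict measurableSet_Ioi] with u hu
    exact hslice1 n u hu
  -- the per-index algebraic identity
  have hEn : ∀ n, (∫ u in Ioc ε (μ n), u ^ (-τ₁))
      = ε ^ σ * (∫ u in Ioc ε (μ n), u ^ (-τ₂))
        + ∫ t in Ioc ε (μ n), t ^ (-τ₂) * (t ^ σ - ε ^ σ) := by
    intro n
    have hint2 : IntegrableOn (fun t : ℝ => t ^ (-τ₂) * (t ^ σ - ε ^ σ)) (Ioc ε (μ n)) := by
      refine (ContinuousOn.integrableOn_Icc ?_).mono_set Ioc_subset_Icc_self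
      have hc : ∀ c : ℝ, ContinuousOn (fun t : ℝ => t ^ c) (Icc ε (μ n)) :=
        fun c => continuousOn_id.rpow_const fun x hx =>
          Or.inl (ne_of_gt (lt_of_lt_of_le hε hx.1))
      exact (hc _).mul ((hc _).sub continuousOn_const)
    rw [← integral_const_mul,
      ← integral_add ((hrpowInt (-τ₂) ε (μ n) le_rfl).const_mul _) hint2]
    apply setIntegral_congr_fun measurableSet_Ioc
    intro u hu
    have hu0 : 0 < u := hε.trans hu.1
    have hkey : u ^ (-τ₂) * u ^ σ = u ^ (-τ₁) := by
      rw [← Real.rpow_add hu0]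
      congr 1
      rw [hσdef]
      ring
    simp only
    rw [mul_sub, hkey]
    ring
  -- put everything together
  calc Itau μ τ₁ ε = ∑ n ∈ S, ∫ u in Ioc ε (μ n), u ^ (-τ₁) := hA τ₁ ε le_rfl
    _ = ∑ n ∈ S, (ε ^ σ * (∫ u in Ioc ε (μ n), u ^ (-τ₂))
          + ∫ t in Ioc ε (μ n), t ^ (-τ₂) * (t ^ σ - ε ^ σ)) :=
        Finset.sum_congr rfl fun n _ => hEn n
    _ = ε ^ σ * (∑ n ∈ S, ∫ u in Ioc ε (μ n), u ^ (-τ₂))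
          + ∑ n ∈ S, ∫ t in Ioc ε (μ n), t ^ (-τ₂) * (t ^ σ - ε ^ σ) := by
        rw [Finset.sum_add_distrib, Finset.mul_sum]
    _ = ε ^ σ * Itau μ τ₂ ε + σ * ∫ u in Ioi ε, Itau μ τ₂ u * u ^ (σ - 1) := by
        rw [hA τ₂ ε le_rfl, hmid]
        congr 1
        rw [Finset.mul_sum]
        exact Finset.sum_congr rfl fun n _ => (key n).symm
end
end

section
/- Let b > 0, let f : (0,∞) → ℝ be integrable on (ε,∞) for every ε > 0 and monotone on some interval (0,δ) with δ > 0, and let g : (0,∞) → (0,∞) be regularly varying at zero with index b. If lim_{ε→0} ( ∫_ε^∞ f(u) du ) / g(ε) = 1, then lim_{ε→0} ε f(ε) / ( b · g(ε) ) = 1. -/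
open MeasureTheory ProbabilityTheory Real Set Filter Topology
open scoped ENNReal NNReal

noncomputable section

/-- `g` is regularly varying at zero with index `b`:
`g(λε)/g(ε) → λ^{-b}` as `ε → 0⁺`, for every `λ > 0`. -/
def RegVaryZero (g : ℝ → ℝ) (b : ℝ) : Prop :=
  ∀ l : ℝ, 0 < l → Filter.Tendsto (fun ε => g (l * ε) / g ε)
    (nhdsWithin 0 (Set.Ioi 0)) (nhds (l ^ (-b)))

namespace MDZAux

lemma U_sub (f : ℝ → ℝ) (hint : ∀ ε : ℝ, 0 < ε → IntegrableOn f (Ioi ε)) {x y : ℝ}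
    (hx : 0 < x) (hxy : x ≤ y) :
    (∫ u in Ioi x, f u) - ∫ u in Ioi y, f u = ∫ u in Ioc x y, f u := by
  have h1 : IntegrableOn f (Ioi x) := hint x hx
  have h2 : IntegrableOn f (Ioc x y) := h1.mono_set Ioc_subset_Ioi_self
  have h3 : IntegrableOn f (Ioi y) := hint y (lt_of_lt_of_le hx hxy)
  have h := setIntegral_union (Ioc_disjoint_Ioi le_rfl) measurableSet_Ioi h2 h3
  rw [Ioc_union_Ioi_eq_Ioi hxy] at h
  linarith

lemma Usub_le (f : ℝ → ℝ) (hint : ∀ ε : ℝ, 0 < ε → IntegrableOn f (Ioi ε)) {x y M : ℝ}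
    (hx : 0 < x) (hxy : x ≤ y) (hM : ∀ u ∈ Ioc x y, f u ≤ M) :
    (∫ u in Ioi x, f u) - (∫ u in Ioi y, f u) ≤ M * (y - x) := by
  rw [U_sub f hint hx hxy]
  have h2 : IntegrableOn f (Ioc x y) := (hint x hx).mono_set Ioc_subset_Ioi_self
  calc ∫ u in Ioc x y, f u ≤ ∫ _u in Ioc x y, M :=
        setIntegral_mono_on h2 (integrableOn_const measure_Ioc_lt_top.ne)
          measurableSet_Ioc hM
    _ = M * (y - x) := by
        rw [setIntegral_const, Real.volume_real_Ioc_of_le hxy, smul_eq_mul]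
        ring

lemma le_Usub (f : ℝ → ℝ) (hint : ∀ ε : ℝ, 0 < ε → IntegrableOn f (Ioi ε)) {x y m : ℝ}
    (hx : 0 < x) (hxy : x ≤ y) (hm : ∀ u ∈ Ioc x y, m ≤ f u) :
    m * (y - x) ≤ (∫ u in Ioi x, f u) - (∫ u in Ioi y, f u) := by
  rw [U_sub f hint hx hxy]
  have h2 : IntegrableOn f (Ioc x y) := (hint x hx).mono_set Ioc_subset_Ioi_self
  calc m * (y - x) = ∫ _u in Ioc x y, m := by
        rw [setIntegral_const, Real.volume_real_Ioc_of_le hxy, smul_eq_mul]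
        ring
    _ ≤ ∫ u in Ioc x y, f u :=
        setIntegral_mono_on (integrableOn_const measure_Ioc_lt_top.ne) h2
          measurableSet_Ioc hm

lemma slope_left (b : ℝ) :
    Tendsto (fun a : ℝ => (a ^ (-b) - 1) / (1 - a)) (𝓝[<] (1:ℝ)) (𝓝 b) := by
  have hd : HasDerivAt (fun x : ℝ => x ^ (-b)) (-b) 1 := by
    have := Real.hasDerivAt_rpow_const (x := 1) (p := -b) (Or.inl one_ne_zero)
    simpa using this
  have hs : Tendsto (slope (fun x : ℝ => x ^ (-b)) 1) (𝓝[≠] (1:ℝ)) (𝓝 (-b)) :=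
    hasDerivAt_iff_tendsto_slope.mp hd
  have hs' : Tendsto (slope (fun x : ℝ => x ^ (-b)) 1) (𝓝[<] (1:ℝ)) (𝓝 (-b)) :=
    hs.mono_left (nhdsWithin_mono _ (fun x hx => ne_of_lt hx))
  have h := hs'.neg
  rw [neg_neg] at h
  refine h.congr (fun a => ?_)
  rw [slope_def_field, Real.one_rpow]
  rw [show (1:ℝ) - a = -(a - 1) by ring, div_neg]

lemma slope_right (b : ℝ) :
    Tendsto (fun c : ℝ => (1 - c ^ (-b)) / (c - 1)) (𝓝[>] (1:ℝ)) (𝓝 b) := by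
  have hd : HasDerivAt (fun x : ℝ => x ^ (-b)) (-b) 1 := by
    have := Real.hasDerivAt_rpow_const (x := 1) (p := -b) (Or.inl one_ne_zero)
    simpa using this
  have hs : Tendsto (slope (fun x : ℝ => x ^ (-b)) 1) (𝓝[≠] (1:ℝ)) (𝓝 (-b)) :=
    hasDerivAt_iff_tendsto_slope.mp hd
  have hs' : Tendsto (slope (fun x : ℝ => x ^ (-b)) 1) (𝓝[>] (1:ℝ)) (𝓝 (-b)) :=
    hs.mono_left (nhdsWithin_mono _ (fun x hx => ne_of_gt hx))
  have h := hs'.neg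
  rw [neg_neg] at h
  refine h.congr (fun a => ?_)
  rw [slope_def_field, Real.one_rpow, ← neg_div, neg_sub]

end MDZAux

open MDZAux

/-- Monotone density theorem at zero: if `f` is eventually monotone
near `0`, `g` is regularly varying at zero with index `b > 0`, and
`(∫_ε^∞ f)/g(ε) → 1`, then `ε f(ε)/(b g(ε)) → 1` as `ε → 0⁺`. -/
theorem monotone_density_at_zero (b : ℝ) (hb : 0 < b) (f g : ℝ → ℝ)
    (hint : ∀ ε : ℝ, 0 < ε → MeasureTheory.IntegrableOn f (Set.Ioi ε))
    (hmono : ∃ δ : ℝ, 0 < δ ∧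
      (MonotoneOn f (Set.Ioo 0 δ) ∨ AntitoneOn f (Set.Ioo 0 δ)))
    (hgpos : ∀ x ∈ Set.Ioi (0:ℝ), 0 < g x)
    (hrv : RegVaryZero g b)
    (hlim : Filter.Tendsto (fun ε => (∫ u in Set.Ioi ε, f u) / g ε)
      (nhdsWithin 0 (Set.Ioi 0)) (nhds 1)) :
    Filter.Tendsto (fun ε => ε * f ε / (b * g ε))
      (nhdsWithin 0 (Set.Ioi 0)) (nhds 1) := by
  obtain ⟨δ, hδ, hmono⟩ := hmono
  set U : ℝ → ℝ := fun t => ∫ u in Ioi t, f u with hU_def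
  -- Step 1: U(lε)/g(ε) → l^(-b)
  have hU : ∀ l : ℝ, 0 < l →
      Tendsto (fun ε => U (l * ε) / g ε) (𝓝[>] (0:ℝ)) (𝓝 (l ^ (-b))) := by
    intro l hl
    have hmap : Tendsto (fun ε : ℝ => l * ε) (𝓝[>] (0:ℝ)) (𝓝[>] (0:ℝ)) := by
      apply tendsto_nhdsWithin_of_tendsto_nhds_of_eventually_within
      · have : Tendsto (fun ε : ℝ => l * ε) (𝓝 (0:ℝ)) (𝓝 (l * 0)) :=
          (continuous_const.mul continuous_id).tendsto 0
        rw [mul_zero] at this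
        exact this.mono_left nhdsWithin_le_nhds
      · filter_upwards [self_mem_nhdsWithin] with ε hε
        exact mul_pos hl hε
    have h1 : Tendsto (fun ε => U (l * ε) / g (l * ε)) (𝓝[>] (0:ℝ)) (𝓝 1) :=
      hlim.comp hmap
    have h2 := hrv l hl
    have h3 := h1.mul h2
    rw [one_mul] at h3
    refine h3.congr' ?_
    filter_upwards [self_mem_nhdsWithin] with ε hε
    have hg : g (l * ε) ≠ 0 := (hgpos _ (mul_pos hl hε)).ne'
    field_simp
  -- Step 2: limits for the two ratio functions
  have hφa : ∀ a : ℝ, 0 < a →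
      Tendsto (fun ε => (U (a * ε) - U ε) / ((1 - a) * g ε)) (𝓝[>] (0:ℝ))
        (𝓝 ((a ^ (-b) - 1) / (1 - a))) := by
    intro a ha
    have h := ((hU a ha).sub hlim).div_const (1 - a)
    refine h.congr (fun ε => ?_)
    simp only [hU_def]
    rw [← sub_div, div_div, mul_comm (g ε) (1 - a)]
  have hφc : ∀ c : ℝ, 0 < c →
      Tendsto (fun ε => (U ε - U (c * ε)) / ((c - 1) * g ε)) (𝓝[>] (0:ℝ))
        (𝓝 ((1 - c ^ (-b)) / (c - 1))) := by
    intro c hc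
    have h := (hlim.sub (hU c hc)).div_const (c - 1)
    refine h.congr (fun ε => ?_)
    simp only [hU_def]
    rw [← sub_div, div_div, mul_comm (g ε) (c - 1)]
  -- The key sandwich inequalities
  -- antitone, right side (lower bound): for 0 < ε, c*ε < δ, 1 < c :
  --   (U ε - U (cε)) / ((c-1) g ε) ≤ ε f ε / g ε
  have hineq_c_anti : AntitoneOn f (Ioo 0 δ) → ∀ c : ℝ, 1 < c → ∀ ε : ℝ,
      ε ∈ Ioo 0 (δ / c) → (U ε - U (c * ε)) / ((c - 1) * g ε) ≤ ε * f ε / g ε := by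
    intro hanti c hc ε hε
    obtain ⟨hε0, hεδ⟩ := hε
    have hcε : c * ε < δ := by
      rw [lt_div_iff₀ (by linarith)] at hεδ; linarith [mul_comm ε c]
    have hεδ' : ε < δ := lt_of_lt_of_le (by nlinarith) (le_refl δ)
    have hnum : U ε - U (c * ε) ≤ f ε * (c * ε - ε) := by
      apply Usub_le f hint hε0 (by nlinarith)
      intro u hu
      exact hanti ⟨hε0, by nlinarith⟩ ⟨lt_trans hε0 hu.1, lt_of_le_of_lt hu.2 hcε⟩
        (le_of_lt hu.1)
    have hg : 0 < g ε := hgpos ε hε0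
    have hd : 0 < (c - 1) * g ε := mul_pos (by linarith) hg
    rw [div_le_div_iff₀ hd hg]
    nlinarith
  -- antitone, left side (upper bound)
  have hineq_a_anti : AntitoneOn f (Ioo 0 δ) → ∀ a : ℝ, a ∈ Ioo (0:ℝ) 1 → ∀ ε : ℝ,
      ε ∈ Ioo 0 δ → ε * f ε / g ε ≤ (U (a * ε) - U ε) / ((1 - a) * g ε) := by
    intro hanti a ⟨ha0, ha1⟩ ε ⟨hε0, hεδ⟩
    have haε : 0 < a * ε := mul_pos ha0 hε0
    have hnum : f ε * (ε - a * ε) ≤ U (a * ε) - U ε := by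
      apply le_Usub f hint haε (by nlinarith)
      intro u hu
      exact hanti ⟨lt_trans haε hu.1, lt_of_le_of_lt hu.2 hεδ⟩ ⟨hε0, hεδ⟩ hu.2
    have hg : 0 < g ε := hgpos ε hε0
    have hd : 0 < (1 - a) * g ε := mul_pos (by linarith) hg
    rw [div_le_div_iff₀ hg hd]
    nlinarith
  -- monotone, left side (lower bound)
  have hineq_a_mono : MonotoneOn f (Ioo 0 δ) → ∀ a : ℝ, a ∈ Ioo (0:ℝ) 1 → ∀ ε : ℝ,
      ε ∈ Ioo 0 δ → (U (a * ε) - U ε) / ((1 - a) * g ε) ≤ ε * f ε / g ε := by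
    intro hmon a ⟨ha0, ha1⟩ ε ⟨hε0, hεδ⟩
    have haε : 0 < a * ε := mul_pos ha0 hε0
    have hnum : U (a * ε) - U ε ≤ f ε * (ε - a * ε) := by
      apply Usub_le f hint haε (by nlinarith)
      intro u hu
      exact hmon ⟨lt_trans haε hu.1, lt_of_le_of_lt hu.2 hεδ⟩ ⟨hε0, hεδ⟩ hu.2
    have hg : 0 < g ε := hgpos ε hε0
    have hd : 0 < (1 - a) * g ε := mul_pos (by linarith) hg
    rw [div_le_div_iff₀ hd hg]
    nlinarith
  -- monotone, right side (upper bound)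
  have hineq_c_mono : MonotoneOn f (Ioo 0 δ) → ∀ c : ℝ, 1 < c → ∀ ε : ℝ,
      ε ∈ Ioo 0 (δ / c) → ε * f ε / g ε ≤ (U ε - U (c * ε)) / ((c - 1) * g ε) := by
    intro hmon c hc ε hε
    obtain ⟨hε0, hεδ⟩ := hε
    have hcε : c * ε < δ := by
      rw [lt_div_iff₀ (by linarith)] at hεδ; linarith [mul_comm ε c]
    have hnum : f ε * (c * ε - ε) ≤ U ε - U (c * ε) := by
      apply le_Usub f hint hε0 (by nlinarith)
      intro u hu
      exact hmon ⟨hε0, by nlinarith⟩ ⟨lt_trans hε0 hu.1, lt_of_le_of_lt hu.2 hcε⟩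
        (le_of_lt hu.1)
    have hg : 0 < g ε := hgpos ε hε0
    have hd : 0 < (c - 1) * g ε := mul_pos (by linarith) hg
    rw [div_le_div_iff₀ hg hd]
    nlinarith
  -- Main claim: ε f ε / g ε → b
  have hTend : Tendsto (fun ε => ε * f ε / g ε) (𝓝[>] (0:ℝ)) (𝓝 b) := by
    rw [tendsto_order]
    constructor
    · -- lower bound: ∀ B < b, eventually B < ε f ε / g ε
      intro B hB
      rcases hmono with hmon | hanti
      · -- monotone: use left side a
        obtain ⟨a, ha01, haB⟩ : ∃ a : ℝ, a ∈ Ioo (0:ℝ) 1 ∧ B < (a ^ (-b) - 1) / (1 - a) := by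
          have h1 : ∀ᶠ a in 𝓝[<] (1:ℝ), a ∈ Ioo (0:ℝ) 1 :=
            (Ioo_mem_nhdsLT_of_mem ⟨zero_lt_one, le_refl 1⟩)
          have h2 := (slope_left b).eventually_const_lt hB
          exact (h1.and h2).exists
        have hφ := (hφa a ha01.1).eventually_const_lt haB
        have hmem : ∀ᶠ ε in 𝓝[>] (0:ℝ), ε ∈ Ioo 0 δ :=
          (Ioo_mem_nhdsGT_of_mem ⟨le_refl 0, hδ⟩)
        filter_upwards [hφ, hmem] with ε h1 h2
        exact lt_of_lt_of_le h1 (hineq_a_mono hmon a ha01 ε h2)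
      · -- antitone: use right side c
        obtain ⟨c, hc1, hcB⟩ : ∃ c : ℝ, 1 < c ∧ B < (1 - c ^ (-b)) / (c - 1) := by
          have h1 : ∀ᶠ c in 𝓝[>] (1:ℝ), 1 < c :=
            self_mem_nhdsWithin
          have h2 := (slope_right b).eventually_const_lt hB
          exact (h1.and h2).exists
        have hφ := (hφc c (by linarith)).eventually_const_lt hcB
        have hmem : ∀ᶠ ε in 𝓝[>] (0:ℝ), ε ∈ Ioo 0 (δ / c) :=
          (Ioo_mem_nhdsGT_of_mem ⟨le_refl 0, div_pos hδ (by linarith)⟩)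
        filter_upwards [hφ, hmem] with ε h1 h2
        exact lt_of_lt_of_le h1 (hineq_c_anti hanti c hc1 ε h2)
    · -- upper bound
      intro B hB
      rcases hmono with hmon | hanti
      · -- monotone: use right side c
        obtain ⟨c, hc1, hcB⟩ : ∃ c : ℝ, 1 < c ∧ (1 - c ^ (-b)) / (c - 1) < B := by
          have h1 : ∀ᶠ c in 𝓝[>] (1:ℝ), 1 < c :=
            self_mem_nhdsWithin
          have h2 := (slope_right b).eventually_lt_const hB
          exact (h1.and h2).exists
        have hφ := (hφc c (by linarith)).eventually_lt_const hcB
        have hmem : ∀ᶠ ε in 𝓝[>] (0:ℝ), ε ∈ Ioo 0 (δ / c) :=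
          (Ioo_mem_nhdsGT_of_mem ⟨le_refl 0, div_pos hδ (by linarith)⟩)
        filter_upwards [hφ, hmem] with ε h1 h2
        exact lt_of_le_of_lt (hineq_c_mono hmon c hc1 ε h2) h1
      · -- antitone: use left side a
        obtain ⟨a, ha01, haB⟩ : ∃ a : ℝ, a ∈ Ioo (0:ℝ) 1 ∧ (a ^ (-b) - 1) / (1 - a) < B := by
          have h1 : ∀ᶠ a in 𝓝[<] (1:ℝ), a ∈ Ioo (0:ℝ) 1 :=
            (Ioo_mem_nhdsLT_of_mem ⟨zero_lt_one, le_refl 1⟩)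
          have h2 := (slope_left b).eventually_lt_const hB
          exact (h1.and h2).exists
        have hφ := (hφa a ha01.1).eventually_lt_const haB
        have hmem : ∀ᶠ ε in 𝓝[>] (0:ℝ), ε ∈ Ioo 0 δ :=
          (Ioo_mem_nhdsGT_of_mem ⟨le_refl 0, hδ⟩)
        filter_upwards [hφ, hmem] with ε h1 h2
        exact lt_of_le_of_lt (hineq_a_anti hanti a ha01 ε h2) h1
  -- conclude
  have h := hTend.div_const b
  rw [div_self hb.ne'] at h
  refine h.congr (fun ε => ?_)
  rw [div_div, mul_comm (g ε) b]
end
end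

section
/- Let f_1, f_2 : (0,∞) → [0,∞). Suppose that f_1 is asymptotically equivalent to f_2 at 0, meaning: for every δ > 0 there exists ε_δ > 0 such that (1−δ) f_1(ε) ≤ f_2(ε) ≤ (1+δ) f_1(ε) for all ε ∈ (0, ε_δ). Then for every δ ∈ (0,1) there exists σ_δ > 0 such that for all σ ∈ (0, σ_δ), (1−δ) · inf_{ε>0}{ σ² f_1(ε) + ε² } ≤ inf_{ε>0}{ σ² f_2(ε) + ε² } ≤ (1+δ) · inf_{ε>0}{ σ² f_1(ε) + ε² }. -/
open MeasureTheory ProbabilityTheory Real Set Filter Topology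
open scoped ENNReal NNReal

set_option maxHeartbeats 1000000
noncomputable section

/-- Asymptotic equivalence is preserved by the infimum
`inf_{ε>0}{σ² f(ε) + ε²}`. -/
theorem infimum_asymp_equiv (f₁ f₂ : ℝ → ℝ)
    (h₁nn : ∀ x ∈ Set.Ioi (0:ℝ), 0 ≤ f₁ x) (h₂nn : ∀ x ∈ Set.Ioi (0:ℝ), 0 ≤ f₂ x)
    (hequiv : ∀ δ : ℝ, 0 < δ → ∃ εδ : ℝ, 0 < εδ ∧ ∀ ε ∈ Set.Ioo (0:ℝ) εδ,
      (1 - δ) * f₁ ε ≤ f₂ ε ∧ f₂ ε ≤ (1 + δ) * f₁ ε) :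
    ∀ δ ∈ Set.Ioo (0:ℝ) 1, ∃ σδ : ℝ, 0 < σδ ∧ ∀ σ ∈ Set.Ioo (0:ℝ) σδ,
      (1 - δ) * (⨅ ε : Set.Ioi (0:ℝ), (σ ^ 2 * f₁ ε + (ε : ℝ) ^ 2))
        ≤ (⨅ ε : Set.Ioi (0:ℝ), (σ ^ 2 * f₂ ε + (ε : ℝ) ^ 2)) ∧
      (⨅ ε : Set.Ioi (0:ℝ), (σ ^ 2 * f₂ ε + (ε : ℝ) ^ 2))
        ≤ (1 + δ) * (⨅ ε : Set.Ioi (0:ℝ), (σ ^ 2 * f₁ ε + (ε : ℝ) ^ 2)) := by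
  intro δ hδ
  obtain ⟨hδ0, hδ1⟩ := hδ
  obtain ⟨εδ, hεδ, heq⟩ := hequiv δ hδ0
  set ε₀ : ℝ := εδ / 2 with hε₀def
  have hε₀ : 0 < ε₀ := by positivity
  have hε₀lt : ε₀ < εδ := by simp only [hε₀def]; linarith
  have hf₁ε₀ : 0 ≤ f₁ ε₀ := h₁nn ε₀ hε₀
  have hc : (0:ℝ) < f₁ ε₀ + 1 := by linarith
  refine ⟨Real.sqrt (εδ^2/2 / (f₁ ε₀ + 1)), Real.sqrt_pos.2 (by positivity), ?_⟩
  intro σ hσ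
  have hσ0 : 0 < σ := hσ.1
  have hσ2 : σ^2 < εδ^2/2 / (f₁ ε₀ + 1) := by
    have h := hσ.2
    have hs := Real.sq_sqrt (show (0:ℝ) ≤ εδ^2/2 / (f₁ ε₀ + 1) by positivity)
    nlinarith [Real.sqrt_nonneg (εδ^2/2 / (f₁ ε₀ + 1))]
  have hkey : σ^2 * f₁ ε₀ + ε₀^2 < εδ^2 := by
    have h2 : σ^2 * (f₁ ε₀ + 1) < εδ^2/2 := by
      calc σ^2 * (f₁ ε₀ + 1) < (εδ^2/2 / (f₁ ε₀ + 1)) * (f₁ ε₀ + 1) := by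
            exact mul_lt_mul_of_pos_right hσ2 hc
        _ = εδ^2/2 := by field_simp
    have h3 : ε₀^2 = εδ^2/4 := by rw [hε₀def]; ring
    nlinarith [sq_nonneg σ]
  haveI : Nonempty (Set.Ioi (0:ℝ)) := ⟨⟨1, by norm_num⟩⟩
  -- boundedness
  have hbdd1 : BddBelow (Set.range fun ε : Set.Ioi (0:ℝ) => σ^2 * f₁ ε + (ε:ℝ)^2) := by
    refine ⟨0, ?_⟩
    rintro x ⟨ε, rfl⟩
    have h := h₁nn ε ε.2
    show (0:ℝ) ≤ σ ^ 2 * f₁ ↑ε + (ε:ℝ) ^ 2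
    nlinarith [sq_nonneg σ, sq_nonneg (ε:ℝ), mul_nonneg (sq_nonneg σ) h]
  have hbdd2 : BddBelow (Set.range fun ε : Set.Ioi (0:ℝ) => σ^2 * f₂ ε + (ε:ℝ)^2) := by
    refine ⟨0, ?_⟩
    rintro x ⟨ε, rfl⟩
    have h := h₂nn ε ε.2
    show (0:ℝ) ≤ σ ^ 2 * f₂ ↑ε + (ε:ℝ) ^ 2
    nlinarith [sq_nonneg σ, sq_nonneg (ε:ℝ), mul_nonneg (sq_nonneg σ) h]
  set I₁ : ℝ := ⨅ ε : Set.Ioi (0:ℝ), (σ ^ 2 * f₁ ε + (ε : ℝ) ^ 2) with hI₁def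
  set I₂ : ℝ := ⨅ ε : Set.Ioi (0:ℝ), (σ ^ 2 * f₂ ε + (ε : ℝ) ^ 2) with hI₂def
  have hI₁nn : 0 ≤ I₁ := by
    refine le_ciInf fun ε => ?_
    have h := h₁nn ε ε.2
    nlinarith [sq_nonneg σ, sq_nonneg (ε:ℝ), mul_nonneg (sq_nonneg σ) h]
  have hI₁le : I₁ ≤ σ^2 * f₁ ε₀ + ε₀^2 := ciInf_le hbdd1 ⟨ε₀, hε₀⟩
  have hI₂le : I₂ ≤ σ^2 * f₂ ε₀ + ε₀^2 := ciInf_le hbdd2 ⟨ε₀, hε₀⟩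
  constructor
  · -- lower bound
    refine le_ciInf fun ε => ?_
    rcases lt_or_ge (ε:ℝ) εδ with hlt | hge
    · have hmem : (ε:ℝ) ∈ Set.Ioo (0:ℝ) εδ := ⟨ε.2, hlt⟩
      have h12 := (heq ε hmem).1
      have hI₁ε : I₁ ≤ σ^2 * f₁ ε + (ε:ℝ)^2 := ciInf_le hbdd1 ε
      have h1 : (1 - δ) * I₁ ≤ (1 - δ) * (σ^2 * f₁ ε + (ε:ℝ)^2) :=
        mul_le_mul_of_nonneg_left hI₁ε (by linarith)
      have h2 : (1 - δ) * (σ^2 * f₁ ε + (ε:ℝ)^2) ≤ σ^2 * f₂ ε + (ε:ℝ)^2 := by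
        have hsq : 0 ≤ σ^2 := sq_nonneg σ
        nlinarith [sq_nonneg (ε:ℝ), mul_le_mul_of_nonneg_left h12 hsq]
      linarith
    · have h1 : (1 - δ) * I₁ ≤ I₁ := by nlinarith
      have h2 : I₁ < εδ^2 := lt_of_le_of_lt hI₁le hkey
      have h3 : εδ^2 ≤ (ε:ℝ)^2 := by nlinarith [ε.2, hεδ]
      have h4 : (ε:ℝ)^2 ≤ σ^2 * f₂ ε + (ε:ℝ)^2 := by
        nlinarith [mul_nonneg (sq_nonneg σ) (h₂nn ε ε.2)]
      linarith
  · -- upper bound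
    have hδ1' : (0:ℝ) < 1 + δ := by linarith
    rw [show (1 + δ) * I₁ = I₁ * (1 + δ) from mul_comm _ _, ← div_le_iff₀ hδ1']
    refine le_ciInf fun ε => ?_
    show I₂ / (1 + δ) ≤ σ ^ 2 * f₁ ↑ε + (ε:ℝ) ^ 2
    rw [div_le_iff₀ hδ1']
    rcases lt_or_ge (ε:ℝ) εδ with hlt | hge
    · have hmem : (ε:ℝ) ∈ Set.Ioo (0:ℝ) εδ := ⟨ε.2, hlt⟩
      have h12 := (heq ε hmem).2
      have hI₂ε : I₂ ≤ σ^2 * f₂ ε + (ε:ℝ)^2 := ciInf_le hbdd2 ε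
      have h2 : σ^2 * f₂ ε + (ε:ℝ)^2 ≤ (σ^2 * f₁ ε + (ε:ℝ)^2) * (1 + δ) := by
        nlinarith [mul_le_mul_of_nonneg_left h12 (sq_nonneg σ), sq_nonneg (ε:ℝ),
          mul_nonneg (sq_nonneg σ) (h₁nn ε ε.2)]
      linarith
    · have hmem₀ : ε₀ ∈ Set.Ioo (0:ℝ) εδ := ⟨hε₀, hε₀lt⟩
      have h12 := (heq ε₀ hmem₀).2
      have h2 : σ^2 * f₂ ε₀ + ε₀^2 ≤ (σ^2 * f₁ ε₀ + ε₀^2) * (1 + δ) := by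
        nlinarith [mul_le_mul_of_nonneg_left h12 (sq_nonneg σ), sq_nonneg ε₀,
          mul_nonneg (sq_nonneg σ) hf₁ε₀]
      have h3 : σ^2 * f₁ ε₀ + ε₀^2 ≤ σ^2 * f₁ ε + (ε:ℝ)^2 := by
        have h4 : εδ^2 ≤ (ε:ℝ)^2 := by nlinarith [ε.2, hεδ]
        nlinarith [mul_nonneg (sq_nonneg σ) (h₁nn ε ε.2)]
      have h5 : (σ^2 * f₁ ε₀ + ε₀^2) * (1 + δ) ≤ (σ^2 * f₁ ε + (ε:ℝ)^2) * (1 + δ) :=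
        mul_le_mul_of_nonneg_right h3 (by linarith)
      linarith
end
end

section
/- Let b ∈ (−2,0), let f_1, f_2 : (0,∞) → [0,∞) be continuous and nonincreasing, and let g : (0,∞) → (0,∞) be regularly varying at zero with index b. Suppose lim_{σ→0} ( inf_{ε>0}{ σ² f_1(ε) + ε² } ) / g(σ) = 1 and lim_{σ→0} ( inf_{ε>0}{ σ² f_2(ε) + ε² } ) / g(σ) = 1. Then lim_{ε→0} f_1(ε)/f_2(ε) = 1, and both f_1 and f_2 are regularly varying at zero with index −(2b+4)/b. -/
open MeasureTheory ProbabilityTheory Real Set Filter Topology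
open scoped ENNReal NNReal

noncomputable section

local notation "L" => nhdsWithin (0:ℝ) (Set.Ioi 0)

def Finf (f : ℝ → ℝ) (σ : ℝ) : ℝ := ⨅ ε : Set.Ioi (0:ℝ), (σ ^ 2 * f ε + (ε : ℝ) ^ 2)

def sigmaStar (f : ℝ → ℝ) (ε : ℝ) : ℝ := sSup {σ : ℝ | 0 < σ ∧ σ ≤ 1 ∧ Finf f σ ≤ ε ^ 2}

lemma tendsto_mul_left_L {c : ℝ} (hc : 0 < c) : Tendsto (fun x => c * x) L L := by
  rw [tendsto_nhdsWithin_iff]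
  constructor
  · have h : Tendsto (fun x : ℝ => c * x) (𝓝 0) (𝓝 0) := by
      simpa using (continuous_mul_left c).tendsto 0
    exact h.mono_left nhdsWithin_le_nhds
  · filter_upwards [self_mem_nhdsWithin] with x hx
    exact mul_pos hc hx

lemma H1 (b : ℝ) (F g : ℝ → ℝ) (hgpos : ∀ x ∈ Set.Ioi (0:ℝ), 0 < g x)
    (hrv : RegVaryZero g b)
    (hF : Tendsto (fun σ => F σ / g σ) L (𝓝 1)) {s : ℝ → ℝ} (hs : Tendsto s L L)
    {ρ : ℝ} (hρ : 0 < ρ) :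
    Tendsto (fun ε => F (ρ * s ε) / g (s ε)) L (𝓝 (ρ ^ (-b))) := by
  have base : Tendsto (fun σ => F (ρ * σ) / g σ) L (𝓝 (ρ ^ (-b))) := by
    have t1 : Tendsto (fun σ => F (ρ * σ) / g (ρ * σ)) L (𝓝 1) := hF.comp (tendsto_mul_left_L hρ)
    have t2 := hrv ρ hρ
    have t3 := t1.mul t2
    rw [one_mul] at t3
    apply t3.congr'
    filter_upwards [self_mem_nhdsWithin] with σ hσ
    have h1 : g (ρ * σ) ≠ 0 := (hgpos _ (mul_pos hρ hσ)).ne'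
    have h2 : g σ ≠ 0 := (hgpos _ hσ).ne'
    field_simp
  exact base.comp hs

lemma Phi_lim (b : ℝ) : Tendsto (fun l : ℝ => (l ^ (-b) - 1) / (l ^ 2 - 1))
    (𝓝[>] (1:ℝ)) (𝓝 (-b / 2)) := by
  have h1 : HasDerivAt (fun x : ℝ => x ^ (-b)) (-b) 1 := by
    simpa using Real.hasDerivAt_rpow_const (x := (1:ℝ)) (p := -b) (Or.inl one_ne_zero)
  have h2 : HasDerivAt (fun x : ℝ => x ^ 2) 2 1 := by
    simpa using hasDerivAt_pow 2 (1:ℝ)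
  have s1 := hasDerivAt_iff_tendsto_slope.1 h1
  have s2 := hasDerivAt_iff_tendsto_slope.1 h2
  have hsub : (Set.Ioi (1:ℝ)) ⊆ {(1:ℝ)}ᶜ := fun x hx =>
    Set.mem_compl_singleton_iff.2 (ne_of_gt hx)
  have s1' := s1.mono_left (nhdsWithin_mono 1 hsub)
  have s2' := s2.mono_left (nhdsWithin_mono 1 hsub)
  have t := s1'.div s2' (two_ne_zero)
  apply t.congr'
  filter_upwards [self_mem_nhdsWithin] with l hl
  rw [Set.mem_Ioi] at hl
  have hl1 : l - 1 ≠ 0 := sub_ne_zero.2 (ne_of_gt hl)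
  simp only [Pi.div_apply, slope_def_field, Real.one_rpow, one_pow]
  rw [div_div_div_cancel_right₀ hl1]

lemma Psi_lim (b : ℝ) : Tendsto (fun l : ℝ => (1 - l ^ b) / (1 - (l ^ 2)⁻¹))
    (𝓝[>] (1:ℝ)) (𝓝 (-b / 2)) := by
  have h1 : HasDerivAt (fun x : ℝ => x ^ b) b 1 := by
    simpa using Real.hasDerivAt_rpow_const (x := (1:ℝ)) (p := b) (Or.inl one_ne_zero)
  have h2 : HasDerivAt (fun x : ℝ => (x ^ 2)⁻¹) (-2) 1 := by
    have hp : HasDerivAt (fun x : ℝ => x ^ 2) 2 1 := by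
      simpa using hasDerivAt_pow 2 (1:ℝ)
    have := hp.inv (by norm_num)
    norm_num at this
    exact this
  have s1 := hasDerivAt_iff_tendsto_slope.1 h1
  have s2 := hasDerivAt_iff_tendsto_slope.1 h2
  have hsub : (Set.Ioi (1:ℝ)) ⊆ {(1:ℝ)}ᶜ := fun x hx =>
    Set.mem_compl_singleton_iff.2 (ne_of_gt hx)
  have s1' := s1.mono_left (nhdsWithin_mono 1 hsub)
  have s2' := s2.mono_left (nhdsWithin_mono 1 hsub)
  have t := s1'.div s2' (by norm_num : (-2:ℝ) ≠ 0)
  have hv : b / (-2) = -b / 2 := by ring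
  rw [hv] at t
  apply t.congr'
  filter_upwards [self_mem_nhdsWithin] with l hl
  rw [Set.mem_Ioi] at hl
  have hl1 : l - 1 ≠ 0 := sub_ne_zero.2 (ne_of_gt hl)
  simp only [Pi.div_apply, slope_def_field, Real.one_rpow, one_pow, inv_one]
  rw [div_div_div_cancel_right₀ hl1, ← neg_div_neg_eq]
  ring_nf

def tb (b : ℝ) : ℝ := (Real.sqrt (1 + b/2))⁻¹

def Cb (b : ℝ) : ℝ := (-b/2) * tb b ^ 2 * ((tb b ^ (-2/b))⁻¹) ^ 2

set_option maxHeartbeats 2000000 in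
lemma aux (b : ℝ) (hb : b ∈ Set.Ioo (-2:ℝ) 0)
    (f g : ℝ → ℝ)
    (hm : AntitoneOn f (Set.Ioi 0))
    (hnn : ∀ x ∈ Set.Ioi (0:ℝ), 0 ≤ f x)
    (hgpos : ∀ x ∈ Set.Ioi (0:ℝ), 0 < g x)
    (hrv : RegVaryZero g b)
    (hl : Tendsto (fun σ => Finf f σ / g σ) L (𝓝 1)) :
    (∀ ε, 0 < ε → 0 < sigmaStar f ε) ∧
    Tendsto (sigmaStar f) L L ∧
    (∀ ε, 0 < ε → ∀ σ, 0 < σ → σ < sigmaStar f ε → Finf f σ ≤ ε ^ 2) ∧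
    (∀ ε, 0 < ε → ∀ σ, sigmaStar f ε < σ → σ ≤ 1 → ε ^ 2 < Finf f σ) ∧
    Tendsto (fun ε => ε ^ 2 / g (sigmaStar f ε)) L (𝓝 1) ∧
    (∀ μ : ℝ, 0 < μ → Tendsto (fun ε => sigmaStar f (μ * ε) / sigmaStar f ε) L
      (𝓝 (μ ^ (-2 / b)))) ∧
    Tendsto (fun ε => f ε * sigmaStar f ε ^ 2 / ε ^ 2) L (𝓝 (Cb b)) := by
  obtain ⟨hb1, hb2⟩ := hb
  haveI : Nonempty (Set.Ioi (0:ℝ)) := (Set.nonempty_Ioi (a := (0:ℝ))).to_subtype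
  -- bddBelow
  have hbdd : ∀ σ : ℝ, BddBelow (Set.range fun ε : Set.Ioi (0:ℝ) => σ ^ 2 * f ε + (ε:ℝ) ^ 2) := by
    intro σ
    refine ⟨0, ?_⟩
    rintro y ⟨⟨x, hx⟩, rfl⟩
    have h := hnn x hx
    have hx' : (0:ℝ) < x := hx
    positivity
  have hFle : ∀ σ x : ℝ, 0 < x → Finf f σ ≤ σ ^ 2 * f x + x ^ 2 := by
    intro σ x hx
    exact ciInf_le (hbdd σ) ⟨x, hx⟩
  have hFnn : ∀ σ : ℝ, 0 ≤ Finf f σ := by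
    intro σ
    apply le_ciInf
    rintro ⟨x, hx⟩
    have h := hnn x hx
    have hx' : (0:ℝ) < x := hx
    positivity
  have hFmono : ∀ σ τ : ℝ, 0 ≤ σ → σ ≤ τ → Finf f σ ≤ Finf f τ := by
    intro σ τ hσ hστ
    apply ciInf_mono (hbdd σ)
    rintro ⟨x, hx⟩
    have hfx := hnn x hx
    have h2 : σ ^ 2 ≤ τ ^ 2 := by nlinarith
    have := mul_le_mul_of_nonneg_right h2 hfx
    simp only
    linarith
  have hF0 : Tendsto (fun σ => Finf f σ) L (𝓝 0) := by
    rw [tendsto_order]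
    constructor
    · intro a ha
      exact Filter.Eventually.of_forall fun σ => lt_of_lt_of_le ha (hFnn σ)
    · intro a ha
      set x₀ := Real.sqrt (a/2) with hx₀def
      have hx₀ : 0 < x₀ := Real.sqrt_pos.2 (by linarith)
      have hx₀2 : x₀ ^ 2 = a/2 := Real.sq_sqrt (by linarith)
      have hσ2 : Tendsto (fun σ : ℝ => σ ^ 2 * f x₀) L (𝓝 0) := by
        have h : Tendsto (fun σ : ℝ => σ ^ 2 * f x₀) (𝓝 0) (𝓝 0) := by
          have hc : Continuous (fun σ : ℝ => σ ^ 2 * f x₀) :=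
            (continuous_pow 2).mul continuous_const
          simpa using hc.tendsto (0:ℝ)
        exact h.mono_left nhdsWithin_le_nhds
      filter_upwards [hσ2.eventually (eventually_lt_nhds (show (0:ℝ) < a/2 by linarith))]
        with σ hσ
      calc Finf f σ ≤ σ ^ 2 * f x₀ + x₀ ^ 2 := hFle σ x₀ hx₀
        _ < a/2 + a/2 := by rw [hx₀2]; linarith
        _ = a := by ring
  have hgF : ∀ᶠ σ in L, 1/2 < Finf f σ / g σ :=
    hl.eventually (eventually_gt_nhds (by norm_num))
  have hFpos : ∀ σ : ℝ, 0 < σ → 0 < Finf f σ := by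
    intro σ hσ
    obtain ⟨δ, hδpos, hδ⟩ : ∃ δ > 0, ∀ x : ℝ, 0 < x → x < δ → 1/2 < Finf f x / g x := by
      rw [eventually_nhdsWithin_iff] at hgF
      obtain ⟨δ, hδpos, hδ⟩ := Metric.eventually_nhds_iff.1 hgF
      refine ⟨δ, hδpos, fun x hx1 hx2 => ?_⟩
      refine hδ ?_ hx1
      rw [Real.dist_eq, sub_zero, abs_of_pos hx1]
      exact hx2
    set τ := min σ (δ/2) with hτdef
    have hτpos : 0 < τ := lt_min hσ (by linarith)
    have hτδ : τ < δ := lt_of_le_of_lt (min_le_right _ _) (by linarith)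
    have h2 := hδ τ hτpos hτδ
    have hgτ := hgpos τ hτpos
    have hFτ : 0 < Finf f τ := by
      rcases eq_or_lt_of_le (hFnn τ) with he | h
      · rw [← he] at h2
        norm_num at h2
      · exact h
    exact lt_of_lt_of_le hFτ (hFmono τ σ hτpos.le (min_le_left _ _))
  have Rlim : ∀ ρ : ℝ, 0 < ρ →
      Tendsto (fun σ => Finf f (ρ * σ) / Finf f σ) L (𝓝 (ρ ^ (-b))) := by
    intro ρ hρ
    have h1 := H1 b (Finf f) g hgpos hrv hl tendsto_id hρ
    have h2 := h1.div hl one_ne_zero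
    rw [div_one] at h2
    apply h2.congr'
    filter_upwards [self_mem_nhdsWithin] with σ hσ
    have hgσ := (hgpos σ hσ).ne'
    have hFσ := (hFpos σ hσ).ne'
    simp only [Pi.div_apply, id_eq]
    rw [div_div_div_cancel_right₀ hgσ]
  -- S properties
  have hSne : ∀ ε : ℝ, 0 < ε → ∃ σ : ℝ, σ ∈ {σ : ℝ | 0 < σ ∧ σ ≤ 1 ∧ Finf f σ ≤ ε ^ 2} := by
    intro ε hε
    have h1 : ∀ᶠ σ in L, Finf f σ < ε ^ 2 :=
      hF0.eventually (eventually_lt_nhds (by positivity))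
    have h2 : ∀ᶠ σ : ℝ in L, σ < 1 :=
      mem_nhdsWithin_of_mem_nhds (Iio_mem_nhds one_pos)
    obtain ⟨σ, h3, h4, h5⟩ := (h1.and (h2.and eventually_mem_nhdsWithin)).exists
    exact ⟨σ, h5, h4.le, h3.le⟩
  have hSbdd : ∀ ε : ℝ, BddAbove {σ : ℝ | 0 < σ ∧ σ ≤ 1 ∧ Finf f σ ≤ ε ^ 2} :=
    fun ε => ⟨1, fun x hx => hx.2.1⟩
  have hspos : ∀ ε : ℝ, 0 < ε → 0 < sigmaStar f ε := by
    intro ε hε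
    obtain ⟨σ, hσ⟩ := hSne ε hε
    exact lt_of_lt_of_le hσ.1 (le_csSup (hSbdd ε) hσ)
  have hsle1 : ∀ ε : ℝ, 0 < ε → sigmaStar f ε ≤ 1 := by
    intro ε hε
    exact csSup_le (hSne ε hε) (fun x hx => hx.2.1)
  have hB3 : ∀ ε, 0 < ε → ∀ σ, 0 < σ → σ < sigmaStar f ε → Finf f σ ≤ ε ^ 2 := by
    intro ε hε σ hσ hlt
    obtain ⟨x, hxS, hx⟩ := exists_lt_of_lt_csSup (hSne ε hε) hlt
    exact le_trans (hFmono σ x hσ.le hx.le) hxS.2.2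
  have hB4 : ∀ ε, 0 < ε → ∀ σ, sigmaStar f ε < σ → σ ≤ 1 → ε ^ 2 < Finf f σ := by
    intro ε hε σ h1 h2
    by_contra h
    push_neg at h
    have hσpos : 0 < σ := lt_trans (hspos ε hε) h1
    exact absurd (le_csSup (hSbdd ε) ⟨hσpos, h2, h⟩) (not_le.2 h1)
  have hsq0 : Tendsto (fun ε : ℝ => ε ^ 2) L (𝓝 0) := by
    have h : Tendsto (fun ε : ℝ => ε ^ 2) (𝓝 0) (𝓝 0) := by
      simpa using (continuous_pow 2).tendsto (0:ℝ)
    exact h.mono_left nhdsWithin_le_nhds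
  have hsL : Tendsto (sigmaStar f) L L := by
    rw [tendsto_nhdsWithin_iff]
    constructor
    · rw [tendsto_order]
      constructor
      · intro a ha
        filter_upwards [eventually_mem_nhdsWithin] with ε hε
        exact lt_of_lt_of_le ha (hspos ε hε).le
      · intro a ha
        set c := min (a/2) 1 with hcdef
        have hcpos : 0 < c := lt_min (by linarith) one_pos
        have hFc := hFpos c hcpos
        filter_upwards [hsq0.eventually (eventually_lt_nhds hFc), eventually_mem_nhdsWithin]
          with ε h1 hε
        have hub : sigmaStar f ε ≤ c := by
          apply csSup_le (hSne ε hε)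
          intro x hx
          by_contra hxc
          push_neg at hxc
          have := hFmono c x hcpos.le hxc.le
          linarith [hx.2.2]
        calc sigmaStar f ε ≤ c := hub
          _ ≤ a/2 := min_le_left _ _
          _ < a := by linarith
    · filter_upwards [eventually_mem_nhdsWithin] with ε hε
      exact hspos ε hε
  -- B5
  have hB5 : Tendsto (fun ε => ε ^ 2 / g (sigmaStar f ε)) L (𝓝 1) := by
    have hcont1 : Tendsto (fun l : ℝ => (l⁻¹) ^ (-b)) (𝓝[>] (1:ℝ)) (𝓝 1) := by
      have h1 : ContinuousAt (fun l : ℝ => (l⁻¹) ^ (-b)) 1 := by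
        apply ContinuousAt.rpow_const
        · exact continuousAt_inv₀ one_ne_zero
        · left; norm_num
      have := h1.tendsto.mono_left (nhdsWithin_le_nhds (s := Set.Ioi (1:ℝ)))
      simpa using this
    have hcont2 : Tendsto (fun l : ℝ => l ^ (-b)) (𝓝[>] (1:ℝ)) (𝓝 1) := by
      have h1 : ContinuousAt (fun l : ℝ => l ^ (-b)) 1 :=
        Real.continuousAt_rpow_const 1 (-b) (Or.inl one_ne_zero)
      have := h1.tendsto.mono_left (nhdsWithin_le_nhds (s := Set.Ioi (1:ℝ)))
      simpa using this
    rw [tendsto_order]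
    constructor
    · intro a ha
      obtain ⟨lam, hlama, hlam1⟩ :=
        ((hcont1.eventually (eventually_gt_nhds ha)).and eventually_mem_nhdsWithin).exists
      rw [Set.mem_Ioi] at hlam1
      have hlaminv : 0 < lam⁻¹ := inv_pos.2 (lt_trans one_pos hlam1)
      have hH := H1 b (Finf f) g hgpos hrv hl hsL hlaminv
      filter_upwards [hH.eventually (eventually_gt_nhds hlama), eventually_mem_nhdsWithin]
        with ε h1 hε
      have hsε := hspos ε hε
      have hg := hgpos _ (Set.mem_Ioi.2 hsε)
      have hlt : lam⁻¹ * sigmaStar f ε < sigmaStar f ε := by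
        nlinarith [mul_inv_cancel₀ (ne_of_gt (lt_trans one_pos hlam1)), hsε, hlaminv, hlam1]
      have hF' : Finf f (lam⁻¹ * sigmaStar f ε) ≤ ε ^ 2 :=
        hB3 ε hε _ (mul_pos hlaminv hsε) hlt
      calc a < Finf f (lam⁻¹ * sigmaStar f ε) / g (sigmaStar f ε) := h1
        _ ≤ ε ^ 2 / g (sigmaStar f ε) := by gcongr
    · intro a ha
      obtain ⟨lam, hlama, hlam1⟩ :=
        ((hcont2.eventually (eventually_lt_nhds ha)).and eventually_mem_nhdsWithin).exists
      rw [Set.mem_Ioi] at hlam1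
      have hlampos : 0 < lam := lt_trans one_pos hlam1
      have hH := H1 b (Finf f) g hgpos hrv hl hsL hlampos
      have hev1 : ∀ᶠ ε in L, lam * sigmaStar f ε ≤ 1 := by
        have hs0 : Tendsto (sigmaStar f) L (𝓝 0) := hsL.mono_right nhdsWithin_le_nhds
        filter_upwards [hs0.eventually (eventually_lt_nhds (inv_pos.2 hlampos))] with ε h1
        have h2 := mul_lt_mul_of_pos_left h1 hlampos
        rw [mul_inv_cancel₀ hlampos.ne'] at h2
        exact h2.le
      filter_upwards [hH.eventually (eventually_lt_nhds hlama), hev1,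
        eventually_mem_nhdsWithin] with ε h1 h2 hε
      have hsε := hspos ε hε
      have hg := hgpos _ (Set.mem_Ioi.2 hsε)
      have hlt : sigmaStar f ε < lam * sigmaStar f ε := by nlinarith
      have hF' : ε ^ 2 < Finf f (lam * sigmaStar f ε) := hB4 ε hε _ hlt h2
      calc ε ^ 2 / g (sigmaStar f ε) ≤ Finf f (lam * sigmaStar f ε) / g (sigmaStar f ε) := by
            gcongr

        _ < a := h1
  -- near-minimizers
  have hEex : ∀ σ : ℝ, ∃ x : ℝ, 0 < σ → (0 < x ∧ σ ^ 2 * f x + x ^ 2 < (1 + σ) * Finf f σ) := by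
    intro σ
    by_cases hσ : 0 < σ
    · have h1 : Finf f σ < (1 + σ) * Finf f σ := by nlinarith [hFpos σ hσ]
      obtain ⟨⟨x, hx⟩, hx2⟩ := exists_lt_of_ciInf_lt h1
      exact ⟨x, fun _ => ⟨hx, hx2⟩⟩
    · exact ⟨1, fun h => absurd h hσ⟩
  choose E hE using hEex
  have hEpos : ∀ σ : ℝ, 0 < σ → 0 < E σ := fun σ h => (hE σ h).1
  have hEineq : ∀ σ : ℝ, 0 < σ → σ ^ 2 * f (E σ) + (E σ) ^ 2 ≤ (1 + σ) * Finf f σ :=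
    fun σ h => (hE σ h).2.le
  have hN1 : ∀ σ : ℝ, 0 < σ → ∀ τ : ℝ,
      Finf f τ ≤ (1 + σ) * Finf f σ + (τ ^ 2 - σ ^ 2) * f (E σ) := by
    intro σ hσ τ
    calc Finf f τ ≤ τ ^ 2 * f (E σ) + (E σ) ^ 2 := hFle τ _ (hEpos σ hσ)
      _ = (σ ^ 2 * f (E σ) + (E σ) ^ 2) + (τ ^ 2 - σ ^ 2) * f (E σ) := by ring
      _ ≤ _ := by linarith [hEineq σ hσ]
  have hone : Tendsto (fun σ : ℝ => (1:ℝ) + σ) L (𝓝 1) := by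
    have h : Tendsto (fun σ : ℝ => (1:ℝ) + σ) (𝓝 0) (𝓝 1) := by
      simpa using (continuous_add_left (1:ℝ)).tendsto (0:ℝ)
    exact h.mono_left nhdsWithin_le_nhds
  -- A1
  have hA1 : Tendsto (fun σ => f (E σ) * σ ^ 2 / Finf f σ) L (𝓝 (-b/2)) := by
    rw [tendsto_order]
    constructor
    · intro a ha
      obtain ⟨lam, hlamval, hlam1⟩ :=
        (((Phi_lim b).eventually (eventually_gt_nhds ha)).and eventually_mem_nhdsWithin).exists
      rw [Set.mem_Ioi] at hlam1
      have hlampos : 0 < lam := lt_trans one_pos hlam1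
      have hR := Rlim lam hlampos
      have hQ : Tendsto (fun σ : ℝ => (Finf f (lam * σ) / Finf f σ - (1 + σ)) / (lam ^ 2 - 1))
          L (𝓝 ((lam ^ (-b) - 1) / (lam ^ 2 - 1))) := (hR.sub hone).div_const _
      filter_upwards [hQ.eventually (eventually_gt_nhds hlamval), eventually_mem_nhdsWithin]
        with σ h1 hσ
      refine lt_of_lt_of_le h1 ?_
      have hF := hFpos σ hσ
      have h2 := hN1 σ hσ (lam * σ)
      have hfE : 0 ≤ f (E σ) := hnn _ (Set.mem_Ioi.2 (hEpos σ hσ))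
      have hlam2 : (0:ℝ) < lam ^ 2 - 1 := by nlinarith
      rw [div_le_div_iff₀ hlam2 hF]
      have hexp : Finf f (lam * σ) / Finf f σ * Finf f σ = Finf f (lam * σ) :=
        div_mul_cancel₀ _ hF.ne'
      calc (Finf f (lam * σ) / Finf f σ - (1 + σ)) * Finf f σ
          = Finf f (lam * σ) - (1 + σ) * Finf f σ := by rw [sub_mul, hexp]
        _ ≤ ((lam * σ) ^ 2 - σ ^ 2) * f (E σ) := by linarith [h2]
        _ = f (E σ) * σ ^ 2 * (lam ^ 2 - 1) := by ring
    · intro a ha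
      obtain ⟨lam, hlamval, hlam1⟩ :=
        (((Psi_lim b).eventually (eventually_lt_nhds ha)).and eventually_mem_nhdsWithin).exists
      rw [Set.mem_Ioi] at hlam1
      have hlampos : 0 < lam := lt_trans one_pos hlam1
      have hR := Rlim lam⁻¹ (inv_pos.2 hlampos)
      have hRb : Tendsto (fun σ : ℝ => Finf f (lam⁻¹ * σ) / Finf f σ) L (𝓝 (lam ^ b)) := by
        have hv : (lam⁻¹ : ℝ) ^ (-b) = lam ^ b := by
          rw [Real.inv_rpow hlampos.le, ← Real.rpow_neg hlampos.le, neg_neg]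
        rw [hv] at hR
        exact hR
      have hQ : Tendsto (fun σ : ℝ => ((1 + σ) - Finf f (lam⁻¹ * σ) / Finf f σ) / (1 - (lam ^ 2)⁻¹))
          L (𝓝 ((1 - lam ^ b) / (1 - (lam ^ 2)⁻¹))) := by
        have := (hone.sub hRb).div_const (1 - (lam ^ 2)⁻¹)
        exact this
      filter_upwards [hQ.eventually (eventually_lt_nhds hlamval), eventually_mem_nhdsWithin]
        with σ h1 hσ
      refine lt_of_le_of_lt ?_ h1
      have hF := hFpos σ hσ
      have h2 := hN1 σ hσ (lam⁻¹ * σ)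
      have hfE : 0 ≤ f (E σ) := hnn _ (Set.mem_Ioi.2 (hEpos σ hσ))
      have hlaminv : lam⁻¹ < 1 := by
        nlinarith [mul_inv_cancel₀ hlampos.ne', inv_pos.2 hlampos]
      have hlam2 : (0:ℝ) < 1 - (lam ^ 2)⁻¹ := by
        have h3 : (lam ^ 2)⁻¹ = lam⁻¹ * lam⁻¹ := by
          rw [sq, mul_inv]
        nlinarith [inv_pos.2 hlampos]
      rw [div_le_div_iff₀ hF hlam2]
      have hexp : Finf f (lam⁻¹ * σ) / Finf f σ * Finf f σ = Finf f (lam⁻¹ * σ) :=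
        div_mul_cancel₀ _ hF.ne'
      have hq2 : (lam⁻¹ * σ) ^ 2 - σ ^ 2 = -(σ ^ 2 * (1 - (lam ^ 2)⁻¹)) := by
        rw [mul_pow]
        have : (lam⁻¹) ^ 2 = (lam ^ 2)⁻¹ := by rw [inv_pow]
        rw [this]; ring
      calc f (E σ) * σ ^ 2 * (1 - (lam ^ 2)⁻¹)
          = -(((lam⁻¹ * σ) ^ 2 - σ ^ 2) * f (E σ)) := by rw [hq2]; ring
        _ ≤ -(Finf f (lam⁻¹ * σ) - (1 + σ) * Finf f σ) := by linarith [h2]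
        _ = ((1 + σ) - Finf f (lam⁻¹ * σ) / Finf f σ) * Finf f σ := by
            rw [sub_mul, hexp]; ring
  -- A2
  have hA2 : Tendsto (fun σ => (E σ) ^ 2 / Finf f σ) L (𝓝 (1 + b/2)) := by
    have hlow : Tendsto (fun σ : ℝ => 1 - f (E σ) * σ ^ 2 / Finf f σ) L (𝓝 (1 + b/2)) := by
      have := (tendsto_const_nhds (x := (1:ℝ)) (f := L)).sub hA1
      norm_num at this
      convert this using 2
      ring
    have hup : Tendsto (fun σ : ℝ => (1 + σ) - f (E σ) * σ ^ 2 / Finf f σ) L (𝓝 (1 + b/2)) := by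
      have := hone.sub hA1
      convert this using 2
      ring
    apply tendsto_of_tendsto_of_tendsto_of_le_of_le' hlow hup
    · filter_upwards [eventually_mem_nhdsWithin] with σ hσ
      have hF := hFpos σ hσ
      have h2 := hFle σ (E σ) (hEpos σ hσ)
      have he : 1 - f (E σ) * σ ^ 2 / Finf f σ = (Finf f σ - f (E σ) * σ ^ 2) / Finf f σ := by
        field_simp
      rw [he]
      gcongr
      linarith
    · filter_upwards [eventually_mem_nhdsWithin] with σ hσ
      have hF := hFpos σ hσ
      have h2 := hEineq σ hσ
      have he : (1 + σ) - f (E σ) * σ ^ 2 / Finf f σ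
          = ((1 + σ) * Finf f σ - f (E σ) * σ ^ 2) / Finf f σ := by
        field_simp
      rw [he]
      gcongr
      linarith
  have hgs : Tendsto (fun ε => g (sigmaStar f ε) / ε ^ 2) L (𝓝 1) := by
    have h := hB5.inv₀ one_ne_zero
    rw [inv_one] at h
    apply h.congr
    intro ε
    rw [inv_div]
  have hq : (0:ℝ) < -2/b := div_pos_iff.2 (Or.inr ⟨by norm_num, hb2⟩)
  have hC2 : ∀ μ : ℝ, 0 < μ → Tendsto (fun ε => sigmaStar f (μ * ε) / sigmaStar f ε) L
      (𝓝 (μ ^ (-2/b))) := by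
    intro μ hμ
    have hμq : 0 < μ ^ (-2/b) := Real.rpow_pos_of_pos hμ _
    have hFeps : ∀ ρ : ℝ, 0 < ρ → Tendsto (fun ε => Finf f (ρ * sigmaStar f ε) / ε ^ 2) L
        (𝓝 (ρ ^ (-b))) := by
      intro ρ hρ
      have hH := H1 b (Finf f) g hgpos hrv hl hsL hρ
      have hc := hH.mul hgs
      rw [mul_one] at hc
      apply hc.congr'
      filter_upwards [eventually_mem_nhdsWithin] with ε hε
      have hg := (hgpos _ (Set.mem_Ioi.2 (hspos ε hε))).ne'
      rw [div_mul_div_comm, mul_comm (g (sigmaStar f ε)), ← div_mul_div_comm,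
        div_self hg, mul_one]
    have keyU : ∀ ρ : ℝ, μ ^ (-2/b) < ρ → ∀ᶠ ε in L, sigmaStar f (μ * ε) ≤ ρ * sigmaStar f ε := by
      intro ρ hρ
      have hρpos : 0 < ρ := lt_trans hμq hρ
      by_contra hcon
      rw [Filter.not_eventually] at hcon
      have hgt : μ ^ 2 < ρ ^ (-b) := by
        have h1 : (μ ^ (-2/b)) ^ (-b) = μ ^ 2 := by
          rw [← Real.rpow_mul hμ.le]
          have hb0 : b ≠ 0 := ne_of_lt hb2
          have hex : (-2/b) * (-b) = 2 := by field_simp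
          rw [hex, show (2:ℝ) = ((2:ℕ):ℝ) by norm_num, Real.rpow_natCast]
        calc μ ^ 2 = (μ ^ (-2/b)) ^ (-b) := h1.symm
          _ < ρ ^ (-b) := Real.rpow_lt_rpow hμq.le hρ (by linarith)
      have hev : ∀ᶠ ε in L, μ ^ 2 * ε ^ 2 < Finf f (ρ * sigmaStar f ε) := by
        filter_upwards [(hFeps ρ hρpos).eventually (eventually_gt_nhds hgt),
          eventually_mem_nhdsWithin] with ε h1 hε
        have hε2 : (0:ℝ) < ε ^ 2 := pow_pos hε 2
        have h3 := mul_lt_mul_of_pos_right h1 hε2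
        rw [div_mul_cancel₀ _ hε2.ne'] at h3
        exact h3
      obtain ⟨ε, h1, h2, hε⟩ := (hcon.and_eventually (hev.and eventually_mem_nhdsWithin)).exists
      push_neg at h1
      have h3 := hB3 (μ * ε) (mul_pos hμ hε) (ρ * sigmaStar f ε)
        (mul_pos hρpos (hspos ε hε)) h1
      rw [mul_pow] at h3
      linarith
    have keyL : ∀ ρ : ℝ, 0 < ρ → ρ < μ ^ (-2/b) →
        ∀ᶠ ε in L, ρ * sigmaStar f ε ≤ sigmaStar f (μ * ε) := by
      intro ρ hρpos hρ
      by_contra hcon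
      rw [Filter.not_eventually] at hcon
      have hlt : ρ ^ (-b) < μ ^ 2 := by
        have h1 : (μ ^ (-2/b)) ^ (-b) = μ ^ 2 := by
          rw [← Real.rpow_mul hμ.le]
          have hb0 : b ≠ 0 := ne_of_lt hb2
          have hex : (-2/b) * (-b) = 2 := by field_simp
          rw [hex, show (2:ℝ) = ((2:ℕ):ℝ) by norm_num, Real.rpow_natCast]
        calc ρ ^ (-b) < (μ ^ (-2/b)) ^ (-b) := Real.rpow_lt_rpow hρpos.le hρ (by linarith)
          _ = μ ^ 2 := h1
      have hev : ∀ᶠ ε in L, Finf f (ρ * sigmaStar f ε) < μ ^ 2 * ε ^ 2 := by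
        filter_upwards [(hFeps ρ hρpos).eventually (eventually_lt_nhds hlt),
          eventually_mem_nhdsWithin] with ε h1 hε
        have hε2 : (0:ℝ) < ε ^ 2 := pow_pos hε 2
        have h3 := mul_lt_mul_of_pos_right h1 hε2
        rw [div_mul_cancel₀ _ hε2.ne'] at h3
        exact h3
      have hev1 : ∀ᶠ ε in L, ρ * sigmaStar f ε ≤ 1 := by
        have hs0 : Tendsto (sigmaStar f) L (𝓝 0) := hsL.mono_right nhdsWithin_le_nhds
        filter_upwards [hs0.eventually (eventually_lt_nhds (inv_pos.2 hρpos))] with ε h1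
        have h2 := mul_lt_mul_of_pos_left h1 hρpos
        rw [mul_inv_cancel₀ hρpos.ne'] at h2
        exact h2.le
      obtain ⟨ε, h1, h2, h2', hε⟩ :=
        (hcon.and_eventually (hev.and (hev1.and eventually_mem_nhdsWithin))).exists
      push_neg at h1
      have h3 := hB4 (μ * ε) (mul_pos hμ hε) (ρ * sigmaStar f ε) h1 h2'
      rw [mul_pow] at h3
      linarith
    rw [tendsto_order]
    constructor
    · intro a ha
      rcases le_or_gt a 0 with h | h
      · filter_upwards [eventually_mem_nhdsWithin] with ε hε
        exact lt_of_le_of_lt h (div_pos (hspos _ (mul_pos hμ hε)) (hspos ε hε))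
      · obtain ⟨ρ, hρ1, hρ2⟩ := exists_between ha
        filter_upwards [keyL ρ (lt_trans h hρ1) hρ2, eventually_mem_nhdsWithin] with ε h1 hε
        have hs := hspos ε hε
        calc a < ρ := hρ1
          _ = ρ * sigmaStar f ε / sigmaStar f ε := by rw [mul_div_cancel_right₀ _ hs.ne']
          _ ≤ sigmaStar f (μ * ε) / sigmaStar f ε := by gcongr
    · intro a ha
      obtain ⟨ρ, hρ1, hρ2⟩ := exists_between ha
      filter_upwards [keyU ρ hρ1, eventually_mem_nhdsWithin] with ε h1 hε
      have hs := hspos ε hε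
      calc sigmaStar f (μ * ε) / sigmaStar f ε ≤ ρ * sigmaStar f ε / sigmaStar f ε := by gcongr
        _ = ρ := by rw [mul_div_cancel_right₀ _ hs.ne']
        _ < a := hρ2
  -- main asymptotic
  have hc2pos : (0:ℝ) < 1 + b/2 := by linarith
  have ht0pos : 0 < tb b := inv_pos.2 (Real.sqrt_pos.2 hc2pos)
  have ht0sq : tb b ^ 2 = (1 + b/2)⁻¹ := by
    rw [tb, inv_pow, Real.sq_sqrt hc2pos.le]
  have master : ∀ θ : ℝ, 0 < θ →
      Tendsto (fun ε => (f (E (sigmaStar f (θ * ε))) * sigmaStar f (θ * ε) ^ 2 / ε ^ 2) *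
        (sigmaStar f ε / sigmaStar f (θ * ε)) ^ 2) L
        (𝓝 ((-b/2) * θ ^ 2 * ((θ ^ (-2/b))⁻¹) ^ 2)) ∧
      Tendsto (fun ε => (E (sigmaStar f (θ * ε))) ^ 2 / ε ^ 2) L (𝓝 ((1 + b/2) * θ ^ 2)) := by
    intro θ hθ
    have hmul : Tendsto (fun ε : ℝ => θ * ε) L L := tendsto_mul_left_L hθ
    have hshat : Tendsto (fun ε => sigmaStar f (θ * ε)) L L := hsL.comp hmul
    have t1 : Tendsto (fun ε => f (E (sigmaStar f (θ * ε))) * (sigmaStar f (θ * ε)) ^ 2 /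
        Finf f (sigmaStar f (θ * ε))) L (𝓝 (-b/2)) := hA1.comp hshat
    have t2 : Tendsto (fun ε => Finf f (sigmaStar f (θ * ε)) / g (sigmaStar f (θ * ε))) L
        (𝓝 1) := hl.comp hshat
    have t3 : Tendsto (fun ε => g (sigmaStar f (θ * ε)) / ε ^ 2) L (𝓝 (θ ^ 2)) := by
      have t3' : Tendsto (fun ε => g (sigmaStar f (θ * ε)) / (θ * ε) ^ 2) L (𝓝 1) :=
        hgs.comp hmul
      have t3'' := t3'.mul_const (θ ^ 2)
      rw [one_mul] at t3''
      apply t3''.congr'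
      filter_upwards [eventually_mem_nhdsWithin] with ε hε
      have hε0 : (ε:ℝ) ≠ 0 := ne_of_gt hε
      field_simp
    have t4 : Tendsto (fun ε => (sigmaStar f ε / sigmaStar f (θ * ε)) ^ 2) L
        (𝓝 (((θ ^ (-2/b))⁻¹) ^ 2)) := by
      have h := (hC2 θ hθ).inv₀ (Real.rpow_pos_of_pos hθ _).ne'
      have h2 := h.pow 2
      apply h2.congr
      intro ε
      rw [inv_div]
    constructor
    · have tall := ((t1.mul t2).mul t3).mul t4
      rw [mul_one] at tall
      apply tall.congr'
      filter_upwards [eventually_mem_nhdsWithin] with ε hε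
      have hsθ := hspos _ (mul_pos hθ hε)
      have hF := (hFpos _ hsθ).ne'
      have hg := (hgpos _ (Set.mem_Ioi.2 hsθ)).ne'
      have hε0 : (ε:ℝ) ≠ 0 := ne_of_gt hε
      field_simp
    · have tA2 : Tendsto (fun ε => (E (sigmaStar f (θ * ε))) ^ 2 /
          Finf f (sigmaStar f (θ * ε))) L (𝓝 (1 + b/2)) := hA2.comp hshat
      have tE := ((tA2.mul t2).mul t3)
      rw [mul_one] at tE
      apply tE.congr'
      filter_upwards [eventually_mem_nhdsWithin] with ε hε
      have hsθ := hspos _ (mul_pos hθ hε)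
      have hF := (hFpos _ hsθ).ne'
      have hg := (hgpos _ (Set.mem_Ioi.2 hsθ)).ne'
      rw [div_mul_div_cancel₀ hF, div_mul_div_cancel₀ hg]
  have hVc : ContinuousAt (fun θ : ℝ => (-b/2) * θ ^ 2 * ((θ ^ (-2/b))⁻¹) ^ 2) (tb b) := by
    have c1 : ContinuousAt (fun θ : ℝ => (-b/2) * θ ^ 2) (tb b) :=
      continuousAt_const.mul (continuous_pow 2).continuousAt
    have c2 : ContinuousAt (fun θ : ℝ => θ ^ (-2/b)) (tb b) :=
      Real.continuousAt_rpow_const _ _ (Or.inl ht0pos.ne')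
    have c3 := (c2.inv₀ (Real.rpow_pos_of_pos ht0pos _).ne').pow 2
    exact c1.mul c3
  have hVt : Tendsto (fun θ : ℝ => (-b/2) * θ ^ 2 * ((θ ^ (-2/b))⁻¹) ^ 2) (𝓝 (tb b))
      (𝓝 (Cb b)) := hVc.tendsto
  have hM : Tendsto (fun ε => f ε * sigmaStar f ε ^ 2 / ε ^ 2) L (𝓝 (Cb b)) := by
    rw [tendsto_order]
    constructor
    · intro a ha
      have hVt' := hVt.mono_left (nhdsWithin_le_nhds (s := Set.Ioi (tb b)))
      have hgt1 : ∀ᶠ θ in 𝓝[>] (tb b), 1 < (1 + b/2) * θ ^ 2 := by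
        filter_upwards [eventually_mem_nhdsWithin] with θ hθ
        rw [Set.mem_Ioi] at hθ
        have h1 : tb b ^ 2 < θ ^ 2 := by nlinarith
        have h2 := mul_inv_cancel₀ hc2pos.ne'
        rw [ht0sq] at h1
        nlinarith
      obtain ⟨θ, hθval, hθ1, hθt0⟩ :=
        ((hVt'.eventually (eventually_gt_nhds ha)).and
          (hgt1.and eventually_mem_nhdsWithin)).exists
      rw [Set.mem_Ioi] at hθt0
      have hθpos : 0 < θ := lt_trans ht0pos hθt0
      obtain ⟨mT, eT⟩ := master θ hθpos
      have hEb : ∀ᶠ ε in L, ε ≤ E (sigmaStar f (θ * ε)) := by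
        filter_upwards [eT.eventually (eventually_gt_nhds hθ1), eventually_mem_nhdsWithin]
          with ε h1 hε
        have hsθ := hspos _ (mul_pos hθpos hε)
        have hEp := hEpos _ hsθ
        have hε2 : (0:ℝ) < ε ^ 2 := pow_pos hε 2
        rw [lt_div_iff₀ hε2, one_mul] at h1
        have hε' : (0:ℝ) < ε := hε
        nlinarith [h1, hEp, hε']
      filter_upwards [mT.eventually (eventually_gt_nhds hθval), hEb,
        eventually_mem_nhdsWithin] with ε h1 h2 hε
      refine lt_of_lt_of_le h1 ?_
      have hsθ := hspos _ (mul_pos hθpos hε)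
      have hEp := hEpos _ hsθ
      have hfle : f (E (sigmaStar f (θ * ε))) ≤ f ε :=
        hm (Set.mem_Ioi.2 hε) (Set.mem_Ioi.2 (lt_of_lt_of_le hε h2)) h2
      have hε0 : (ε:ℝ) ≠ 0 := ne_of_gt hε
      have hXeq : (f (E (sigmaStar f (θ * ε))) * sigmaStar f (θ * ε) ^ 2 / ε ^ 2) *
          (sigmaStar f ε / sigmaStar f (θ * ε)) ^ 2
          = f (E (sigmaStar f (θ * ε))) * sigmaStar f ε ^ 2 / ε ^ 2 := by
        field_simp
      rw [hXeq]
      gcongr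
    · intro a ha
      have hVt' := hVt.mono_left (nhdsWithin_le_nhds (s := Set.Iio (tb b)))
      have hgt1 : ∀ᶠ θ in 𝓝[<] (tb b), (1 + b/2) * θ ^ 2 < 1 ∧ 0 < θ := by
        have hpos : ∀ᶠ θ : ℝ in 𝓝[<] (tb b), 0 < θ :=
          mem_nhdsWithin_of_mem_nhds (Ioi_mem_nhds ht0pos)
        filter_upwards [eventually_mem_nhdsWithin, hpos] with θ hθ hθpos
        rw [Set.mem_Iio] at hθ
        refine ⟨?_, hθpos⟩
        have h1 : θ ^ 2 < tb b ^ 2 := by nlinarith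
        have h2 := mul_inv_cancel₀ hc2pos.ne'
        rw [ht0sq] at h1
        nlinarith
      obtain ⟨θ, hθval, hθ1, hθpos⟩ :=
        ((hVt'.eventually (eventually_lt_nhds ha)).and hgt1).exists
      obtain ⟨mT, eT⟩ := master θ hθpos
      have hEb : ∀ᶠ ε in L, E (sigmaStar f (θ * ε)) ≤ ε := by
        filter_upwards [eT.eventually (eventually_lt_nhds hθ1), eventually_mem_nhdsWithin]
          with ε h1 hε
        have hsθ := hspos _ (mul_pos hθpos hε)
        have hEp := hEpos _ hsθ
        have hε2 : (0:ℝ) < ε ^ 2 := pow_pos hε 2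
        rw [div_lt_one hε2] at h1
        have hε' : (0:ℝ) < ε := hε
        nlinarith [h1, hEp, hε']
      filter_upwards [mT.eventually (eventually_lt_nhds hθval), hEb,
        eventually_mem_nhdsWithin] with ε h1 h2 hε
      refine lt_of_le_of_lt ?_ h1
      have hsθ := hspos _ (mul_pos hθpos hε)
      have hEp := hEpos _ hsθ
      have hfle : f ε ≤ f (E (sigmaStar f (θ * ε))) :=
        hm (Set.mem_Ioi.2 hEp) (Set.mem_Ioi.2 hε) h2
      have hε0 : (ε:ℝ) ≠ 0 := ne_of_gt hε
      have hXeq : (f (E (sigmaStar f (θ * ε))) * sigmaStar f (θ * ε) ^ 2 / ε ^ 2) *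
          (sigmaStar f ε / sigmaStar f (θ * ε)) ^ 2
          = f (E (sigmaStar f (θ * ε))) * sigmaStar f ε ^ 2 / ε ^ 2 := by
        field_simp
      rw [hXeq]
      gcongr
  exact ⟨hspos, hsL, hB3, hB4, hB5, hC2, hM⟩

set_option maxHeartbeats 1000000

/-- Tauberian theorem for the infimum: if both
`inf_{ε>0}{σ² f_i(ε) + ε²}` are asymptotically equivalent to a function `g` regularly
varying at zero with index `b ∈ (−2,0)`, then `f₁ ∼ f₂` at `0⁺` and both are regularly
varying at zero with index `−(2b+4)/b`. -/
theorem tauberian_infimum (b : ℝ) (hb : b ∈ Set.Ioo (-2 : ℝ) 0)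
    (f₁ f₂ g : ℝ → ℝ)
    (h₁c : ContinuousOn f₁ (Set.Ioi 0)) (h₂c : ContinuousOn f₂ (Set.Ioi 0))
    (h₁m : AntitoneOn f₁ (Set.Ioi 0)) (h₂m : AntitoneOn f₂ (Set.Ioi 0))
    (h₁nn : ∀ x ∈ Set.Ioi (0:ℝ), 0 ≤ f₁ x) (h₂nn : ∀ x ∈ Set.Ioi (0:ℝ), 0 ≤ f₂ x)
    (hgpos : ∀ x ∈ Set.Ioi (0:ℝ), 0 < g x)
    (hrv : RegVaryZero g b)
    (hl₁ : Filter.Tendsto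
      (fun σ => (⨅ ε : Set.Ioi (0:ℝ), (σ ^ 2 * f₁ ε + (ε : ℝ) ^ 2)) / g σ)
      (nhdsWithin 0 (Set.Ioi 0)) (nhds 1))
    (hl₂ : Filter.Tendsto
      (fun σ => (⨅ ε : Set.Ioi (0:ℝ), (σ ^ 2 * f₂ ε + (ε : ℝ) ^ 2)) / g σ)
      (nhdsWithin 0 (Set.Ioi 0)) (nhds 1)) :
    Filter.Tendsto (fun ε => f₁ ε / f₂ ε) (nhdsWithin 0 (Set.Ioi 0)) (nhds 1) ∧
    RegVaryZero f₁ (-(2 * b + 4) / b) ∧ RegVaryZero f₂ (-(2 * b + 4) / b) := by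
  have hl₁' : Tendsto (fun σ => Finf f₁ σ / g σ) L (𝓝 1) := hl₁
  have hl₂' : Tendsto (fun σ => Finf f₂ σ / g σ) L (𝓝 1) := hl₂
  obtain ⟨hs1pos, hs1L, hB31, hB41, hB51, hC21, hM1⟩ := aux b hb f₁ g h₁m h₁nn hgpos hrv hl₁'
  obtain ⟨hs2pos, hs2L, hB32, hB42, hB52, hC22, hM2⟩ := aux b hb f₂ g h₂m h₂nn hgpos hrv hl₂'
  obtain ⟨hb1, hb2⟩ := hb
  have hb0 : b ≠ 0 := ne_of_lt hb2
  have hc2pos : (0:ℝ) < 1 + b/2 := by linarith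
  have ht0pos : 0 < tb b := inv_pos.2 (Real.sqrt_pos.2 hc2pos)
  have hCbpos : 0 < Cb b := by
    rw [Cb]
    have h1 : (0:ℝ) < -b/2 := by linarith
    have h2 : (0:ℝ) < tb b ^ 2 := pow_pos ht0pos 2
    have h3 : (0:ℝ) < ((tb b ^ (-2/b))⁻¹) ^ 2 :=
      pow_pos (inv_pos.2 (Real.rpow_pos_of_pos ht0pos _)) 2
    exact mul_pos (mul_pos h1 h2) h3
  have hgs2 : Tendsto (fun ε => g (sigmaStar f₂ ε) / ε ^ 2) L (𝓝 1) := by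
    have h := hB52.inv₀ one_ne_zero
    rw [inv_one] at h
    apply h.congr
    intro ε
    rw [inv_div]
  have hF1eps : ∀ ρ : ℝ, 0 < ρ →
      Tendsto (fun ε => Finf f₁ (ρ * sigmaStar f₂ ε) / ε ^ 2) L (𝓝 (ρ ^ (-b))) := by
    intro ρ hρ
    have hH := H1 b (Finf f₁) g hgpos hrv hl₁' hs2L hρ
    have hc := hH.mul hgs2
    rw [mul_one] at hc
    apply hc.congr'
    filter_upwards [eventually_mem_nhdsWithin] with ε hε
    have hg := (hgpos _ (Set.mem_Ioi.2 (hs2pos ε hε))).ne'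
    rw [div_mul_div_cancel₀ hg]
  have keyU : ∀ ρ : ℝ, 1 < ρ → ∀ᶠ ε in L, sigmaStar f₁ ε ≤ ρ * sigmaStar f₂ ε := by
    intro ρ hρ
    have hρpos : 0 < ρ := lt_trans one_pos hρ
    by_contra hcon
    rw [Filter.not_eventually] at hcon
    have hgt : (1:ℝ) < ρ ^ (-b) :=
      Real.one_lt_rpow_iff_of_pos hρpos |>.2 (Or.inl ⟨hρ, by linarith⟩)
    have hev : ∀ᶠ ε in L, ε ^ 2 < Finf f₁ (ρ * sigmaStar f₂ ε) := by
      filter_upwards [(hF1eps ρ hρpos).eventually (eventually_gt_nhds hgt),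
        eventually_mem_nhdsWithin] with ε h1 hε
      have hε2 : (0:ℝ) < ε ^ 2 := pow_pos hε 2
      rw [lt_div_iff₀ hε2, one_mul] at h1
      exact h1
    obtain ⟨ε, h1, h2, hε⟩ := (hcon.and_eventually (hev.and eventually_mem_nhdsWithin)).exists
    push_neg at h1
    have h3 := hB31 ε hε (ρ * sigmaStar f₂ ε) (mul_pos hρpos (hs2pos ε hε)) h1
    linarith
  have keyL : ∀ ρ : ℝ, 0 < ρ → ρ < 1 → ∀ᶠ ε in L, ρ * sigmaStar f₂ ε ≤ sigmaStar f₁ ε := by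
    intro ρ hρpos hρ
    by_contra hcon
    rw [Filter.not_eventually] at hcon
    have hlt : ρ ^ (-b) < 1 := Real.rpow_lt_one hρpos.le hρ (by linarith)
    have hev : ∀ᶠ ε in L, Finf f₁ (ρ * sigmaStar f₂ ε) < ε ^ 2 := by
      filter_upwards [(hF1eps ρ hρpos).eventually (eventually_lt_nhds hlt),
        eventually_mem_nhdsWithin] with ε h1 hε
      have hε2 : (0:ℝ) < ε ^ 2 := pow_pos hε 2
      rw [div_lt_one hε2] at h1
      exact h1
    have hev1 : ∀ᶠ ε in L, ρ * sigmaStar f₂ ε ≤ 1 := by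
      have hs0 : Tendsto (sigmaStar f₂) L (𝓝 0) := hs2L.mono_right nhdsWithin_le_nhds
      filter_upwards [hs0.eventually (eventually_lt_nhds (inv_pos.2 hρpos))] with ε h1
      have h2 := mul_lt_mul_of_pos_left h1 hρpos
      rw [mul_inv_cancel₀ hρpos.ne'] at h2
      exact h2.le
    obtain ⟨ε, h1, h2, h2', hε⟩ :=
      (hcon.and_eventually (hev.and (hev1.and eventually_mem_nhdsWithin))).exists
    push_neg at h1
    have h3 := hB41 ε hε (ρ * sigmaStar f₂ ε) h1 h2'
    linarith
  have cross : Tendsto (fun ε => sigmaStar f₁ ε / sigmaStar f₂ ε) L (𝓝 1) := by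
    rw [tendsto_order]
    constructor
    · intro a ha
      rcases le_or_gt a 0 with h | h
      · filter_upwards [eventually_mem_nhdsWithin] with ε hε
        exact lt_of_le_of_lt h (div_pos (hs1pos ε hε) (hs2pos ε hε))
      · obtain ⟨ρ, hρ1, hρ2⟩ := exists_between ha
        filter_upwards [keyL ρ (lt_trans h hρ1) hρ2, eventually_mem_nhdsWithin] with ε h1 hε
        have hs := hs2pos ε hε
        calc a < ρ := hρ1
          _ = ρ * sigmaStar f₂ ε / sigmaStar f₂ ε := by rw [mul_div_cancel_right₀ _ hs.ne']
          _ ≤ sigmaStar f₁ ε / sigmaStar f₂ ε := by gcongr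
    · intro a ha
      obtain ⟨ρ, hρ1, hρ2⟩ := exists_between ha
      filter_upwards [keyU ρ hρ1, eventually_mem_nhdsWithin] with ε h1 hε
      have hs := hs2pos ε hε
      calc sigmaStar f₁ ε / sigmaStar f₂ ε ≤ ρ * sigmaStar f₂ ε / sigmaStar f₂ ε := by gcongr
        _ = ρ := by rw [mul_div_cancel_right₀ _ hs.ne']
        _ < a := hρ2
  have hfpos : ∀ F : ℝ → ℝ, Tendsto (fun ε => F ε * sigmaStar F ε ^ 2 / ε ^ 2) L (𝓝 (Cb b)) →
      ∀ᶠ ε in L, 0 < F ε := by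
    intro F hM
    filter_upwards [hM.eventually (eventually_gt_nhds
      (show Cb b / 2 < Cb b by linarith)),
      eventually_mem_nhdsWithin] with ε h1 hε
    by_contra h
    push_neg at h
    have h2 : F ε * sigmaStar F ε ^ 2 ≤ 0 := mul_nonpos_of_nonpos_of_nonneg h (sq_nonneg _)
    have h3 : F ε * sigmaStar F ε ^ 2 / ε ^ 2 ≤ 0 :=
      div_nonpos_iff.2 (Or.inr ⟨h2, sq_nonneg ε⟩)
    linarith [half_pos hCbpos]
  have RVgen : ∀ F : ℝ → ℝ, (∀ ε, 0 < ε → 0 < sigmaStar F ε) →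
      (∀ μ : ℝ, 0 < μ → Tendsto (fun ε => sigmaStar F (μ * ε) / sigmaStar F ε) L
        (𝓝 (μ ^ (-2/b)))) →
      Tendsto (fun ε => F ε * sigmaStar F ε ^ 2 / ε ^ 2) L (𝓝 (Cb b)) →
      RegVaryZero F (-(2 * b + 4) / b) := by
    intro F hsp hc2 hM
    intro l hlpos
    have hFev := hfpos F hM
    have hmul := tendsto_mul_left_L hlpos
    have hM1l : Tendsto (fun ε => F (l * ε) * sigmaStar F (l * ε) ^ 2 / (l * ε) ^ 2) L
       (𝓝 (Cb b)) := hM.comp hmul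
    have hC2l := hc2 l hlpos
    have hiq : ((l:ℝ) ^ (-2/b)) ≠ 0 := (Real.rpow_pos_of_pos hlpos _).ne'
    have t := hM1l.mul ((hM.inv₀ hCbpos.ne').mul (((hC2l.inv₀ hiq).pow 2).mul_const (l ^ 2)))
    have h1 : ((l ^ (-2/b))⁻¹) ^ 2 = l ^ (4/b) := by
      rw [← Real.rpow_neg hlpos.le, ← Real.rpow_natCast (l ^ (-(-2/b))) 2,
        ← Real.rpow_mul hlpos.le]
      congr 1
      push_cast
      field_simp
      ring
    have h2 : (l:ℝ) ^ 2 = l ^ ((2:ℝ)) := by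
      rw [← Real.rpow_natCast l 2]
      norm_num
    have hval : Cb b * ((Cb b)⁻¹ * (((l ^ (-2/b))⁻¹) ^ 2 * l ^ 2)) = l ^ (-(-(2 * b + 4) / b)) := by
      rw [h1, h2, ← Real.rpow_add hlpos]
      rw [show (4/b + 2 : ℝ) = -(-(2 * b + 4) / b) by field_simp; ring]
      rw [← mul_assoc, mul_inv_cancel₀ hCbpos.ne', one_mul]
    rw [hval] at t
    apply t.congr'
    filter_upwards [hFev, eventually_mem_nhdsWithin] with ε hf hε
    have hs1 := hsp ε hε
    have hs2 := hsp (l * ε) (mul_pos hlpos hε)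
    have hε0 : (ε:ℝ) ≠ 0 := ne_of_gt hε
    have hl0 : (l:ℝ) ≠ 0 := ne_of_gt hlpos
    field_simp
  refine ⟨?_, RVgen f₁ hs1pos hC21 hM1, RVgen f₂ hs2pos hC22 hM2⟩
  have t := hM1.mul ((hM2.inv₀ hCbpos.ne').mul ((cross.inv₀ one_ne_zero).pow 2))
  have hval : Cb b * ((Cb b)⁻¹ * ((1:ℝ)⁻¹) ^ 2) = 1 := by
    field_simp
  rw [hval] at t
  apply t.congr'
  filter_upwards [hfpos f₂ hM2, eventually_mem_nhdsWithin] with ε h2 hε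
  have hs1 := hs1pos ε hε
  have hs2 := hs2pos ε hε
  have hε0 : (ε:ℝ) ≠ 0 := ne_of_gt hε
  field_simp
end
end

section
/- Let μ = (μ_n)_{n∈ℕ} be a sequence of nonnegative reals with μ_n → 0 as n → ∞, whose semi-axis-counting function M_μ satisfies the regularity condition (RC) with witness function f. Let x* > 0 be such that M_μ(x*) ≥ 1, and define g(x) := x(1 + 1/M_μ(x)) for x ∈ (0, x*). Then lim_{x→0} f(g(x))/f(x) = 1. -/
open MeasureTheory ProbabilityTheory Real Set Filter Topology
open scoped ENNReal NNReal

noncomputable section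

/-- The elasticity `ρ(t) = (d/dt) ln f(e^{-t})`. -/
def elasticity (f : ℝ → ℝ) : ℝ → ℝ :=
  fun t => deriv (fun s : ℝ => Real.log (f (Real.exp (-s)))) t

/-- `f` is a witness for the regularity condition (RC) for the sequence `μ`:
`f : (0,∞) → (0,∞)` is nonincreasing, `C¹`, `M_μ(x)/f(x) → 1` as `x → 0⁺`, and its
elasticity `ρ` either has a finite limit at `∞`, or tends to `∞` with
`ln ρ(t) = O(ρ(t/2))` and `ρ` nondecreasing on some `(t*,∞)`. -/
structure IsRCWitness (μ : ℕ → ℝ) (f : ℝ → ℝ) : Prop where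
  pos : ∀ x ∈ Set.Ioi (0:ℝ), 0 < f x
  anti : AntitoneOn f (Set.Ioi 0)
  smooth : ContDiffOn ℝ 1 f (Set.Ioi 0)
  equiv : Filter.Tendsto (fun x => Mcount μ x / f x) (nhdsWithin 0 (Set.Ioi 0)) (nhds 1)
  alt : (∃ b : ℝ, Filter.Tendsto (elasticity f) Filter.atTop (nhds b)) ∨
    (Filter.Tendsto (elasticity f) Filter.atTop Filter.atTop ∧
     (fun t => Real.log (elasticity f t)) =O[Filter.atTop] (fun t => elasticity f (t / 2)) ∧
     ∃ tStar : ℝ, 0 < tStar ∧ MonotoneOn (elasticity f) (Set.Ioi tStar))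

/-- The regularity condition (RC). -/
def SatisfiesRC (μ : ℕ → ℝ) : Prop := ∃ f : ℝ → ℝ, IsRCWitness μ f

/-- If `f` is a witness for (RC) and `g(x) = x(1 + 1/M_μ(x))`, then
`f(g(x))/f(x) → 1` as `x → 0⁺`. -/
theorem rc_witness_perturbation (μ : ℕ → ℝ) (hnn : ∀ n, 0 ≤ μ n)
    (hlim : Filter.Tendsto μ Filter.atTop (nhds 0))
    (f : ℝ → ℝ) (hf : IsRCWitness μ f)
    (xstar : ℝ) (hxstar : 0 < xstar) (hMx : 1 ≤ Mcount μ xstar) :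
    Filter.Tendsto (fun x => f (x * (1 + 1 / Mcount μ x)) / f x)
      (nhdsWithin 0 (Set.Ioi 0)) (nhds 1) := by
  classical
  set F : ℝ → ℝ := fun t => Real.log (f (Real.exp (-t))) with hFdef
  have hfpos : ∀ y : ℝ, 0 < y → 0 < f y := fun y hy => hf.pos y hy
  have hfd : ∀ y : ℝ, 0 < y → DifferentiableAt ℝ f y := by
    intro y hy
    exact (hf.smooth.differentiableOn one_ne_zero).differentiableAt (isOpen_Ioi.mem_nhds hy)
  have hFdiff : ∀ t : ℝ, DifferentiableAt ℝ F t := by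
    intro t
    have h1 : DifferentiableAt ℝ (fun s : ℝ => Real.exp (-s)) t :=
      (Real.differentiable_exp.comp differentiable_neg).differentiableAt
    have h2 : DifferentiableAt ℝ (fun s : ℝ => f (Real.exp (-s))) t :=
      (hfd _ (Real.exp_pos (-t))).comp t h1
    exact h2.log (ne_of_gt (hfpos _ (Real.exp_pos (-t))))
  have hFderiv : ∀ t : ℝ, HasDerivAt F (elasticity f t) t := fun t => (hFdiff t).hasDerivAt
  have hFcont : Continuous F := by
    have : Differentiable ℝ F := fun t => hFdiff t
    exact this.continuous
  have hFmono : Monotone F := by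
    intro a b hab
    have h1 : Real.exp (-b) ≤ Real.exp (-a) := Real.exp_le_exp.2 (neg_le_neg hab)
    have h2 := hf.anti (mem_Ioi.2 (Real.exp_pos (-b))) (mem_Ioi.2 (Real.exp_pos (-a))) h1
    exact Real.log_le_log (hfpos _ (Real.exp_pos (-a))) h2
  have hρ0 : ∀ t, 0 ≤ elasticity f t := by
    intro t
    have hs := hasDerivAt_iff_tendsto_slope.1 (hFderiv t)
    have hs' : Tendsto (slope F t) (𝓝[>] t) (𝓝 (elasticity f t)) :=
      hs.mono_left (nhdsWithin_mono _ fun y hy => Set.mem_compl_singleton_iff.2 (ne_of_gt hy))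
    refine ge_of_tendsto hs' ?_
    filter_upwards [self_mem_nhdsWithin] with y hy
    rw [slope_def_field]
    exact div_nonneg (sub_nonneg.2 (hFmono (le_of_lt hy))) (sub_nonneg.2 (le_of_lt hy))
  have hexpF : ∀ x : ℝ, 0 < x → Real.exp (F (-Real.log x)) = f x := by
    intro x hx
    rw [hFdef]
    simp only [neg_neg, Real.exp_log hx]
    exact Real.exp_log (hfpos x hx)
  have hfin : ∀ ε : ℝ, 0 < ε → {n : ℕ | ε ≤ μ n}.Finite := by
    intro ε hε
    obtain ⟨N, hN⟩ := eventually_atTop.1 (hlim.eventually (eventually_lt_nhds hε))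
    refine Set.Finite.subset (Set.finite_Iio N) fun n hn => ?_
    by_contra h
    exact absurd hn (not_le.2 (hN n (not_lt.1 h)))
  have hMle : ∀ x y : ℝ, 0 < x → x ≤ y → Mcount μ y ≤ Mcount μ x := by
    intro x y hx hxy
    have := Set.ncard_le_ncard (fun n (hn : n ∈ {n : ℕ | y ≤ μ n}) => le_trans hxy hn) (hfin x hx)
    unfold Mcount
    exact_mod_cast this
  have hM1 : ∀ x : ℝ, 0 < x → x ≤ xstar → 1 ≤ Mcount μ x :=
    fun x hx hxs => le_trans hMx (hMle x xstar hx hxs)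
  -- the two time-changes
  set t : ℝ → ℝ := fun x => -Real.log x with htdef
  set s : ℝ → ℝ := fun x => -Real.log (x * (1 + 1 / Mcount μ x)) with hsdef
  have htTop : Tendsto t (𝓝[>] (0:ℝ)) atTop :=
    tendsto_neg_atBot_atTop.comp Real.tendsto_log_nhdsGT_zero
  -- basic facts about log of the correction factor
  have hlogc : ∀ x : ℝ, 0 < x → x ≤ xstar →
      0 < Real.log (1 + 1 / Mcount μ x) ∧
      Real.log (1 + 1 / Mcount μ x) ≤ (Mcount μ x)⁻¹ ∧
      s x = t x - Real.log (1 + 1 / Mcount μ x) := by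
    intro x hx hxs
    have hM := hM1 x hx hxs
    have hMpos : (0:ℝ) < Mcount μ x := lt_of_lt_of_le one_pos hM
    have hinvpos : 0 < 1 / Mcount μ x := by positivity
    have hcpos : (0:ℝ) < 1 + 1 / Mcount μ x := by linarith
    refine ⟨Real.log_pos (by linarith), ?_, ?_⟩
    · have := Real.log_le_sub_one_of_pos hcpos
      rw [one_div] at this ⊢
      linarith
    · show -Real.log (x * (1 + 1 / Mcount μ x)) = -Real.log x - Real.log (1 + 1 / Mcount μ x)
      rw [Real.log_mul (ne_of_gt hx) (ne_of_gt hcpos)]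
      ring
  have hsTop : Tendsto s (𝓝[>] (0:ℝ)) atTop := by
    refine tendsto_atTop_mono' _ ?_ (tendsto_atTop_add_const_right _ (-Real.log 2) htTop)
    filter_upwards [Ioo_mem_nhdsGT_of_mem (⟨le_refl (0:ℝ), hxstar⟩ : (0:ℝ) ∈ Set.Ico 0 xstar)]
      with x hx
    obtain ⟨h1, h2, h3⟩ := hlogc x hx.1 hx.2.le
    have hM := hM1 x hx.1 hx.2.le
    have hMpos : (0:ℝ) < Mcount μ x := lt_of_lt_of_le one_pos hM
    have hinv1 : (Mcount μ x)⁻¹ ≤ 1 := by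
      rw [inv_le_one_iff₀]; right; exact hM
    have hlog2 : Real.log (1 + 1 / Mcount μ x) ≤ Real.log 2 := by
      apply Real.log_le_log (by positivity)
      rw [one_div]; linarith
    rw [h3]; linarith
  -- the mean value theorem step
  have hMVT : ∀ x : ℝ, 0 < x → x ≤ xstar → ∃ ξ ∈ Set.Ioo (s x) (t x),
      F (t x) - F (s x) = elasticity f ξ * Real.log (1 + 1 / Mcount μ x) := by
    intro x hx hxs
    obtain ⟨h1, h2, h3⟩ := hlogc x hx hxs
    have hst : s x < t x := by rw [h3]; linarith
    obtain ⟨ξ, hξ, hslope⟩ :=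
      exists_hasDerivAt_eq_slope F (elasticity f) hst hFcont.continuousOn (fun y _ => hFderiv y)
    refine ⟨ξ, hξ, ?_⟩
    have hts : t x - s x = Real.log (1 + 1 / Mcount μ x) := by rw [h3]; ring
    rw [hslope, hts]
    field_simp
  -- reduction to the additive statement
  suffices hD : Tendsto (fun x => F (s x) - F (t x)) (𝓝[>] (0:ℝ)) (𝓝 0) by
    have h1 : Tendsto (fun x => Real.exp (F (s x) - F (t x))) (𝓝[>] (0:ℝ)) (𝓝 1) := by
      have := (Real.continuous_exp.tendsto 0).comp hD
      simpa [Function.comp_def] using this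
    refine h1.congr' ?_
    filter_upwards [Ioo_mem_nhdsGT_of_mem (⟨le_refl (0:ℝ), hxstar⟩ : (0:ℝ) ∈ Set.Ico 0 xstar)]
      with x hx
    have hM := hM1 x hx.1 hx.2.le
    have hMpos : (0:ℝ) < Mcount μ x := lt_of_lt_of_le one_pos hM
    have hcpos : (0:ℝ) < 1 + 1 / Mcount μ x := by positivity
    have hgpos : 0 < x * (1 + 1 / Mcount μ x) := mul_pos hx.1 hcpos
    rw [Real.exp_sub, hexpF _ hx.1, hexpF _ hgpos]
  -- final squeeze device
  have hfinish : ∀ R : ℝ → ℝ, Tendsto R (𝓝[>] (0:ℝ)) (𝓝 0) →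
      (∀ᶠ x in 𝓝[>] (0:ℝ), F (t x) - F (s x) ≤ R x) →
      Tendsto (fun x => F (s x) - F (t x)) (𝓝[>] (0:ℝ)) (𝓝 0) := by
    intro R hR hub
    have hRneg : Tendsto (fun x => -R x) (𝓝[>] (0:ℝ)) (𝓝 0) := by
      simpa using hR.neg
    refine tendsto_of_tendsto_of_tendsto_of_le_of_le' hRneg tendsto_const_nhds ?_ ?_
    · filter_upwards [hub] with x h
      linarith
    · filter_upwards [Ioo_mem_nhdsGT_of_mem (⟨le_refl (0:ℝ), hxstar⟩ : (0:ℝ) ∈ Set.Ico 0 xstar)]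
        with x hx
      obtain ⟨ξ, hξ, -⟩ := hMVT x hx.1 hx.2.le
      have : s x ≤ t x := le_of_lt (hξ.1.trans hξ.2)
      linarith [hFmono this]
  by_cases hbdd : BddAbove (Set.range F)
  · -- f has a finite limit at 0⁺
    have hL := tendsto_atTop_ciSup hFmono hbdd
    have h1 : Tendsto (fun x => F (s x)) (𝓝[>] (0:ℝ)) (𝓝 (⨆ i, F i)) := hL.comp hsTop
    have h2 : Tendsto (fun x => F (t x)) (𝓝[>] (0:ℝ)) (𝓝 (⨆ i, F i)) := hL.comp htTop
    simpa using h1.sub h2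
  · -- f tends to infinity at 0⁺
    have hFtop : Tendsto F atTop atTop := by
      apply tendsto_atTop_atTop_of_monotone hFmono
      intro b
      by_contra h
      push_neg at h
      exact hbdd ⟨b, fun y ⟨a, ha⟩ => ha ▸ (h a).le⟩
    have hftop : Tendsto f (𝓝[>] (0:ℝ)) atTop := by
      have h := Real.tendsto_exp_atTop.comp (hFtop.comp htTop)
      refine h.congr' ?_
      filter_upwards [self_mem_nhdsWithin] with x hx
      simp only [Function.comp_apply]
      exact hexpF x hx
    have hMtop : Tendsto (Mcount μ) (𝓝[>] (0:ℝ)) atTop := by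
      have h := Filter.Tendsto.pos_mul_atTop one_pos hf.equiv hftop
      refine h.congr' ?_
      filter_upwards [self_mem_nhdsWithin] with x hx
      exact div_mul_cancel₀ _ (ne_of_gt (hfpos x hx))
    have hinvM : Tendsto (fun x => (Mcount μ x)⁻¹) (𝓝[>] (0:ℝ)) (𝓝 0) := by
      exact hMtop.inv_tendsto_atTop
    rcases hf.alt with ⟨b, hb⟩ | ⟨hρtop, hO, tS, htS0, hmonoρ⟩
    · -- case (i): the elasticity has a finite limit
      have hb1 : 0 < b + 1 := by
        have : (0:ℝ) ≤ b := ge_of_tendsto hb (Eventually.of_forall hρ0)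
        linarith
      obtain ⟨T, hT⟩ := eventually_atTop.1 (hb.eventually (eventually_le_nhds (lt_add_one b)))
      apply hfinish (fun x => (b + 1) * (Mcount μ x)⁻¹)
      · simpa using tendsto_const_nhds.mul hinvM
      · filter_upwards [Ioo_mem_nhdsGT_of_mem
          (⟨le_refl (0:ℝ), hxstar⟩ : (0:ℝ) ∈ Set.Ico 0 xstar),
          hsTop.eventually_ge_atTop T] with x hx hsx
        obtain ⟨ξ, hξ, heq⟩ := hMVT x hx.1 hx.2.le
        obtain ⟨hl1, hl2, -⟩ := hlogc x hx.1 hx.2.le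
        have hρξ : elasticity f ξ ≤ b + 1 := hT ξ (hsx.trans hξ.1.le)
        rw [heq]
        calc elasticity f ξ * Real.log (1 + 1 / Mcount μ x)
            ≤ (b + 1) * Real.log (1 + 1 / Mcount μ x) :=
              mul_le_mul_of_nonneg_right hρξ hl1.le
          _ ≤ (b + 1) * (Mcount μ x)⁻¹ := mul_le_mul_of_nonneg_left hl2 hb1.le
    · -- case (ii): the elasticity tends to infinity
      obtain ⟨c, hc⟩ := hO.bound
      set C := max c 1 with hCdef
      have hC0 : (0:ℝ) < C := lt_of_lt_of_le one_pos (le_max_right _ _)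
      set K := F (tS + 1) with hKdef
      have hcore : Tendsto (fun T => Real.log (elasticity f T) - F T) atTop atBot := by
        have hmain : ∀ᶠ T in atTop,
            Real.log (elasticity f T) - F T ≤ F T * (-(1/2)) + 2 * C * |K| := by
          filter_upwards [hc, eventually_ge_atTop (max (2 * (tS + 1)) (max (4 * C) 1)),
            hFtop.eventually_ge_atTop 0] with T hcT hTge hFT0
          have hT1 : (1:ℝ) ≤ T := le_trans (le_max_of_le_right (le_max_right _ _)) hTge
          have hT4C : 4 * C ≤ T := le_trans (le_max_of_le_right (le_max_left _ _)) hTge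
          have hTts : 2 * (tS + 1) ≤ T := le_trans (le_max_left _ _) hTge
          have hTpos : (0:ℝ) < T := lt_of_lt_of_le one_pos hT1
          have hhalf : tS + 1 ≤ T / 2 := by linarith
          have hhalf' : tS < T / 2 := by linarith
          have hlt : T / 2 < T := by linarith
          obtain ⟨η, hη, hsl⟩ := exists_hasDerivAt_eq_slope F (elasticity f) hlt
            hFcont.continuousOn (fun y _ => hFderiv y)
          have h1 : elasticity f (T/2) ≤ elasticity f η :=
            hmonoρ (mem_Ioi.2 hhalf') (mem_Ioi.2 (hhalf'.trans hη.1)) hη.1.le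
          have h2 : F T - F (T/2) = elasticity f η * (T - T/2) := by
            rw [hsl, div_mul_cancel₀ _ (by linarith : (0:ℝ) < T - T/2).ne']
          have h3 : elasticity f (T/2) * (T/2) ≤ F T - F (T/2) := by
            rw [h2]
            have he : T - T/2 = T/2 := by ring
            rw [he]
            exact mul_le_mul_of_nonneg_right h1 (by linarith)
          have hKle : K ≤ F (T/2) := hFmono hhalf
          have h4 : elasticity f (T/2) * (T/2) ≤ F T - K := by linarith
          have h5 : Real.log (elasticity f T) ≤ C * elasticity f (T/2) := by
            calc Real.log (elasticity f T) ≤ |Real.log (elasticity f T)| := le_abs_self _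
              _ ≤ c * |elasticity f (T/2)| := by simpa [Real.norm_eq_abs] using hcT
              _ ≤ C * elasticity f (T/2) := by
                  rw [abs_of_nonneg (hρ0 _)]
                  exact mul_le_mul_of_nonneg_right (le_max_left _ _) (hρ0 _)
          have h6 : Real.log (elasticity f T) * (T/2) ≤ C * (F T - K) := by
            calc Real.log (elasticity f T) * (T/2)
                ≤ C * elasticity f (T/2) * (T/2) :=
                  mul_le_mul_of_nonneg_right h5 (by linarith)
              _ = C * (elasticity f (T/2) * (T/2)) := by ring
              _ ≤ C * (F T - K) := mul_le_mul_of_nonneg_left h4 hC0.le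
          have h7 : C * (F T - K) ≤ (T/4) * F T + C * |K| * T := by
            have e1 : C * F T ≤ (T/4) * F T :=
              mul_le_mul_of_nonneg_right (by linarith) hFT0
            have e2 : C * (-K) ≤ C * |K| := mul_le_mul_of_nonneg_left (neg_le_abs K) hC0.le
            have e3 : C * |K| ≤ C * |K| * T := le_mul_of_one_le_right (by positivity) hT1
            have e4 : C * (F T - K) = C * F T + C * (-K) := by ring
            rw [e4]
            linarith
          have h8 : Real.log (elasticity f T) * (T/2) ≤ (F T * (1/2) + 2 * C * |K|) * (T/2) := by
            have e5 : (F T * (1/2) + 2 * C * |K|) * (T/2) = (T/4) * F T + C * |K| * T := by ring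
            rw [e5]
            linarith
          have h9 : Real.log (elasticity f T) ≤ F T * (1/2) + 2 * C * |K| :=
            le_of_mul_le_mul_right h8 (by linarith : (0:ℝ) < T/2)
          linarith
        have hdown : Tendsto (fun T => F T * (-(1/2)) + 2 * C * |K|) atTop atBot :=
          tendsto_atBot_add_const_right _ _
            (hFtop.atTop_mul_const_of_neg (by norm_num : (-(1/2):ℝ) < 0))
        exact tendsto_atBot_mono' atTop hmain hdown
      have hsmall : Tendsto (fun T => elasticity f T * Real.exp (-F T)) atTop (𝓝 0) := by
        have h := Real.tendsto_exp_atBot.comp hcore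
        refine h.congr' ?_
        filter_upwards [hρtop.eventually_gt_atTop 0] with T hT
        simp only [Function.comp_apply]
        rw [Real.exp_sub, Real.exp_log hT, Real.exp_neg, div_eq_mul_inv]
      have happ : Tendsto (fun x => elasticity f (t x) * Real.exp (-F (t x)))
          (𝓝[>] (0:ℝ)) (𝓝 0) := hsmall.comp htTop
      have hfM : Tendsto (fun x => f x / Mcount μ x) (𝓝[>] (0:ℝ)) (𝓝 1) := by
        have h := hf.equiv.inv₀ one_ne_zero
        rw [inv_one] at h
        refine h.congr fun x => ?_
        rw [inv_div]
      have hR : Tendsto (fun x => elasticity f (t x) * (Mcount μ x)⁻¹) (𝓝[>] (0:ℝ)) (𝓝 0) := by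
        have h := happ.mul hfM
        rw [zero_mul] at h
        refine h.congr' ?_
        filter_upwards [Ioo_mem_nhdsGT_of_mem
          (⟨le_refl (0:ℝ), hxstar⟩ : (0:ℝ) ∈ Set.Ico 0 xstar)] with x hx
        have hMpos : (0:ℝ) < Mcount μ x := lt_of_lt_of_le one_pos (hM1 x hx.1 hx.2.le)
        have hf0 : f x ≠ 0 := ne_of_gt (hfpos x hx.1)
        have hexp : Real.exp (-F (t x)) = (f x)⁻¹ := by
          have : Real.exp (F (t x)) = f x := hexpF x hx.1
          rw [Real.exp_neg, this]
        rw [hexp]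
        field_simp
      apply hfinish _ hR
      filter_upwards [Ioo_mem_nhdsGT_of_mem
        (⟨le_refl (0:ℝ), hxstar⟩ : (0:ℝ) ∈ Set.Ico 0 xstar),
        hsTop.eventually_gt_atTop tS] with x hx hsx
      obtain ⟨ξ, hξ, heq⟩ := hMVT x hx.1 hx.2.le
      obtain ⟨hl1, hl2, -⟩ := hlogc x hx.1 hx.2.le
      have hmle : elasticity f ξ ≤ elasticity f (t x) :=
        hmonoρ (mem_Ioi.2 (hsx.trans hξ.1)) (mem_Ioi.2 (hsx.trans (hξ.1.trans hξ.2))) hξ.2.le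
      rw [heq]
      calc elasticity f ξ * Real.log (1 + 1 / Mcount μ x)
          ≤ elasticity f (t x) * Real.log (1 + 1 / Mcount μ x) :=
            mul_le_mul_of_nonneg_right hmle hl1.le
        _ ≤ elasticity f (t x) * (Mcount μ x)⁻¹ := mul_le_mul_of_nonneg_left hl2 (hρ0 _)
end
end
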